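/- arXiv:1603.06706 — 8 statements merged into one kernel-verified Lean document; each statement's English description precedes it below -/
import Mathlib

section
/- Let p be a prime, n ≥ 1, q = p^n, and let F be a finite field with q² elements. Then the number of points of the projective plane PG(2,F) (the projectivization of F³) whose homogeneous coordinates (x, y, t) satisfy x^{q+1} + y^{q+1} + t^{q+1} = 0 is exactly q³ + 1. -/
open Polynomial Finset

section Hermitian

variable {F : Type} [Field F] [Fintype F] {q : ℕ}

lemma herm_fac (hq2 : 2 ≤ q) : q ^ 2 - 1 = (q - 1) * (q + 1) := by
  obtain ⟨k, rfl⟩ : ∃ k, q = k + 2 := ⟨q - 2, by omega⟩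
  have e1 : (k + 2) - 1 = k + 1 := by omega
  have e2 : (k + 2) ^ 2 = k ^ 2 + 4 * k + 4 := by ring
  have e3 : (k + 1) * (k + 2 + 1) = k ^ 2 + 4 * k + 3 := by ring
  rw [e1]; omega

lemma herm_fac' (hq2 : 2 ≤ q) : q ^ 2 - 1 = (q + 1) * (q - 1) := by
  rw [herm_fac hq2, mul_comm]

/-- There is a primitive `(q+1)`-th root of unity in `F`. -/
lemma herm_exists_prim (hF : Fintype.card F = q ^ 2) (hq2 : 2 ≤ q) :
    ∃ ζ : F, IsPrimitiveRoot ζ (q + 1) := by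
  classical
  obtain ⟨g, hg⟩ := IsCyclic.exists_generator (α := Fˣ)
  have hord : orderOf g = q ^ 2 - 1 := by
    rw [orderOf_eq_card_of_forall_mem_zpowers hg, Nat.card_eq_fintype_card,
      Fintype.card_units, hF]
  have hprim : IsPrimitiveRoot ((g : F)) (q ^ 2 - 1) := by
    rw [← hord]
    exact IsPrimitiveRoot.coe_units_iff.mpr (IsPrimitiveRoot.orderOf g)
  have hpos : 0 < q ^ 2 - 1 := by
    have : 4 ≤ q ^ 2 := by nlinarith
    omega
  exact ⟨(g : F) ^ (q - 1), hprim.pow hpos (herm_fac hq2)⟩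

/-- Number of `(q+1)`-th roots of unity. -/
lemma herm_card_roots_one (hF : Fintype.card F = q ^ 2) (hq2 : 2 ≤ q) :
    Nat.card {x : F // x ^ (q + 1) = 1} = q + 1 := by
  obtain ⟨ζ, hζ⟩ := herm_exists_prim hF hq2
  classical
  have h1 : (univ.filter fun x : F => x ^ (q + 1) = 1) = nthRootsFinset (q + 1) (1 : F) := by
    ext x
    simp [Polynomial.mem_nthRootsFinset (by omega : 0 < q + 1)]
  rw [Nat.card_eq_fintype_card, Fintype.card_subtype, h1, hζ.card_nthRootsFinset]

/-- Existence of `(q+1)`-th roots of elements of the subfield. -/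
lemma herm_exists_root (hF : Fintype.card F = q ^ 2) (hq2 : 2 ≤ q) {c : F}
    (hc : c ^ (q - 1) = 1) : ∃ x : F, x ^ (q + 1) = c := by
  classical
  have hc0 : c ≠ 0 := by
    intro h
    rw [h, zero_pow (by omega : q - 1 ≠ 0)] at hc
    exact zero_ne_one hc
  obtain ⟨g, hg⟩ := IsCyclic.exists_generator (α := Fˣ)
  have hord : orderOf g = q ^ 2 - 1 := by
    rw [orderOf_eq_card_of_forall_mem_zpowers hg, Nat.card_eq_fintype_card,
      Fintype.card_units, hF]
  set u : Fˣ := Units.mk0 c hc0 with hu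
  obtain ⟨k, hk⟩ := (mem_powers_iff_mem_zpowers.mpr (hg u))
  have hk' : g ^ k = u := hk
  have hupow : u ^ (q - 1) = 1 := by
    ext
    push_cast
    exact hc
  have hdvd : q ^ 2 - 1 ∣ k * (q - 1) := by
    rw [← hord]
    apply orderOf_dvd_of_pow_eq_one
    rw [pow_mul, hk', hupow]
  have hq1 : q + 1 ∣ k := by
    rw [herm_fac' hq2] at hdvd
    exact (Nat.mul_dvd_mul_iff_right (by omega : 0 < q - 1)).mp hdvd
  obtain ⟨j, hj⟩ := hq1
  refine ⟨(g ^ j : Fˣ), ?_⟩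
  have h2 : (g ^ j) ^ (q + 1) = u := by
    rw [← pow_mul, mul_comm j (q + 1), ← hj, hk']
  calc ((g ^ j : Fˣ) : F) ^ (q + 1) = (((g ^ j) ^ (q + 1) : Fˣ) : F) := by push_cast; ring
    _ = c := by rw [h2]; rfl

/-- The number of solutions of `x ^ (q+1) = c` for `c` in the subfield, `c ≠ 0`. -/
lemma herm_card_fiber (hF : Fintype.card F = q ^ 2) (hq2 : 2 ≤ q) {c : F}
    (hc : c ^ (q - 1) = 1) :
    Nat.card {x : F // x ^ (q + 1) = c} = q + 1 := by
  obtain ⟨x0, hx0⟩ := herm_exists_root hF hq2 hc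
  have hc0 : c ≠ 0 := by
    intro h
    rw [h, zero_pow (by omega : q - 1 ≠ 0)] at hc
    exact zero_ne_one hc
  have hx00 : x0 ≠ 0 := by
    intro h
    rw [h, zero_pow (by omega : q + 1 ≠ 0)] at hx0
    exact hc0 hx0.symm
  refine (Nat.card_congr ?_).trans (herm_card_roots_one hF hq2)
  refine ⟨fun x => ⟨x.1 / x0, by rw [div_pow, x.2, hx0, div_self hc0]⟩,
      fun y => ⟨y.1 * x0, by rw [mul_pow, y.2, hx0, one_mul]⟩, fun x => ?_, fun y => ?_⟩
  · ext; exact div_mul_cancel₀ _ hx00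
  · ext; exact mul_div_cancel_right₀ _ hx00

/-- Number of solutions of `x ^ (q+1) = 0`. -/
lemma herm_card_fiber_zero (hq2 : 2 ≤ q) :
    Nat.card {x : F // x ^ (q + 1) = 0} = 1 := by
  classical
  rw [Nat.card_eq_fintype_card, Fintype.card_eq_one_iff]
  refine ⟨⟨0, by simp⟩, fun y => Subtype.ext ?_⟩
  exact (pow_eq_zero_iff (by omega : q + 1 ≠ 0)).mp y.2

end Hermitian

/-- Let `p` be a prime, `n ≥ 1`, `q = p ^ n`, and let `F` be a finite field
with `q²` elements. Then the number of points of the projective plane `PG(2, F)` (the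
projectivization of `F³`) whose homogeneous coordinates `(x, y, t)` satisfy
`x^(q+1) + y^(q+1) + t^(q+1) = 0` is exactly `q³ + 1`. -/
theorem hermitian_curve_card_rational_points
    (p n q : ℕ) (hp : p.Prime) (hn : 1 ≤ n) (hq : q = p ^ n)
    (F : Type) [Field F] [Fintype F] (hF : Fintype.card F = q ^ 2) :
    Nat.card {P : Projectivization F (Fin 3 → F) //
        P.rep 0 ^ (q + 1) + P.rep 1 ^ (q + 1) + P.rep 2 ^ (q + 1) = 0} = q ^ 3 + 1 := by
  classical
  have hq2 : 2 ≤ q := by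
    rw [hq]
    calc 2 = 2 ^ 1 := rfl
      _ ≤ p ^ n := Nat.pow_le_pow_left hp.two_le n |>.trans' (Nat.pow_le_pow_right (by omega) hn)
  -- characteristic of F is p
  have hr : CharP F (ringChar F) := ringChar.charP F
  have hrp : (ringChar F).Prime := CharP.char_is_prime F (ringChar F)
  obtain ⟨m, hm, hcard⟩ := FiniteField.card F (ringChar F)
  have hpr : p = ringChar F := by
    have h1 : p ∣ (ringChar F) ^ (m : ℕ) := by
      rw [← hcard, hF, hq, ← pow_mul]
      exact dvd_pow_self p (by positivity)
    exact (Nat.prime_dvd_prime_iff_eq hp hrp).mp (hp.dvd_of_dvd_pow h1)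
  haveI hchar : CharP F p := hpr ▸ hr
  haveI : ExpChar F p := ExpChar.prime hp
  -- Frobenius x ↦ x^q
  have hfrob : ∀ a b : F, (a + b) ^ q = a ^ q + b ^ q := by
    intro a b
    have := map_add (iterateFrobenius F p n) a b
    simpa only [iterateFrobenius_def, ← hq] using this
  have hfrobneg : ∀ a : F, (-a) ^ q = -(a ^ q) := by
    intro a
    have := map_neg (iterateFrobenius F p n) a
    simpa only [iterateFrobenius_def, ← hq] using this
  have hxq2 : ∀ x : F, x ^ q ^ 2 = x := fun x => by rw [← hF]; exact FiniteField.pow_card x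
  have hfix : ∀ x : F, (x ^ (q + 1)) ^ q = x ^ (q + 1) := by
    intro x
    rw [← pow_mul]
    have h1 : (q + 1) * q = q ^ 2 + q := by ring
    rw [h1, pow_add, hxq2, ← pow_succ']
  have hfixsum : ∀ c : F, c ^ q = c → c ≠ 0 → c ^ (q - 1) = 1 := by
    intro c h hc0
    have h1 : c ^ (q - 1) * c = 1 * c := by
      rw [← pow_succ, one_mul]
      have h2 : q - 1 + 1 = q := by omega
      rw [h2, h]
    exact mul_right_cancel₀ hc0 h1
  -- fiber counts
  have hNfib : ∀ s : F, s ^ q = s →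
      Nat.card {t : F // t ^ (q + 1) = -s} = if s = 0 then 1 else q + 1 := by
    intro s hs
    by_cases h0 : s = 0
    · rw [if_pos h0]
      simp only [h0, neg_zero]
      exact herm_card_fiber_zero hq2
    · rw [if_neg h0]
      apply herm_card_fiber hF hq2
      apply hfixsum
      · rw [hfrobneg, hs]
      · simpa using h0
  -- count of pairs
  have hA : Nat.card {v : F × F // v.1 ^ (q + 1) + v.2 ^ (q + 1) = 0}
      = 1 + (q ^ 2 - 1) * (q + 1) := by
    have e : {v : F × F // v.1 ^ (q + 1) + v.2 ^ (q + 1) = 0}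
        ≃ Σ y : F, {x : F // x ^ (q + 1) = -(y ^ (q + 1))} :=
      ⟨fun v => ⟨v.1.2, v.1.1, eq_neg_of_add_eq_zero_left v.2⟩,
       fun s => ⟨(s.2.1, s.1), by rw [s.2.2]; ring⟩,
       fun v => rfl, fun s => rfl⟩
    rw [Nat.card_congr e, Nat.card_eq_fintype_card, Fintype.card_sigma]
    have h1 : ∀ y : F, Fintype.card {x : F // x ^ (q + 1) = -(y ^ (q + 1))}
        = if y = 0 then 1 else q + 1 := by
      intro y
      rw [← Nat.card_eq_fintype_card, hNfib _ (hfix y)]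
      congr 1
      simp [pow_eq_zero_iff (by omega : q + 1 ≠ 0)]
    simp_rw [h1]
    rw [Finset.sum_ite, Finset.sum_const, Finset.sum_const]
    have hf1 : (univ.filter fun y : F => y = 0).card = 1 := by
      rw [show (univ.filter fun y : F => y = 0) = {0} by ext x; simp]
      rfl
    have hf2 : (univ.filter fun y : F => ¬y = 0).card = q ^ 2 - 1 := by
      rw [Finset.filter_not, Finset.card_sdiff_of_subset (Finset.filter_subset _ _), hf1,
        Finset.card_univ, hF]
    rw [hf1, hf2, smul_eq_mul, smul_eq_mul, mul_one]
  -- total count of affine solutions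
  have hAle : 1 + (q ^ 2 - 1) * (q + 1) ≤ q ^ 4 := by
    have h1 : q ^ 2 - 1 ≤ q ^ 2 := Nat.sub_le _ _
    have h2 : 1 + (q ^ 2 - 1) * (q + 1) ≤ 1 + q ^ 2 * (q + 1) :=
      Nat.add_le_add_left (Nat.mul_le_mul_right _ h1) 1
    nlinarith
  have hT : Nat.card {v : Fin 3 → F // v 0 ^ (q + 1) + v 1 ^ (q + 1) + v 2 ^ (q + 1) = 0}
      = 1 + (q ^ 2 - 1) * (q + 1) + (q ^ 4 - (1 + (q ^ 2 - 1) * (q + 1))) * (q + 1) := by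
    have e : {v : Fin 3 → F // v 0 ^ (q + 1) + v 1 ^ (q + 1) + v 2 ^ (q + 1) = 0}
        ≃ Σ xy : F × F, {t : F // t ^ (q + 1) = -(xy.1 ^ (q + 1) + xy.2 ^ (q + 1))} :=
      ⟨fun v => ⟨(v.1 0, v.1 1), v.1 2, eq_neg_of_add_eq_zero_right v.2⟩,
       fun s => ⟨![s.1.1, s.1.2, s.2.1], by
          simp only [Matrix.cons_val_zero, Matrix.cons_val_one, Matrix.head_cons,
            Matrix.cons_val_two, Matrix.tail_cons]
          rw [s.2.2]; ring⟩,
       fun v => Subtype.ext (by funext i; fin_cases i <;> rfl), fun s => rfl⟩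
    rw [Nat.card_congr e, Nat.card_eq_fintype_card, Fintype.card_sigma]
    have h1 : ∀ xy : F × F, Fintype.card {t : F // t ^ (q + 1) = -(xy.1 ^ (q + 1) + xy.2 ^ (q + 1))}
        = if xy.1 ^ (q + 1) + xy.2 ^ (q + 1) = 0 then 1 else q + 1 := by
      intro xy
      rw [← Nat.card_eq_fintype_card]
      exact hNfib _ (by rw [hfrob, hfix, hfix])
    simp_rw [h1]
    rw [Finset.sum_ite, Finset.sum_const, Finset.sum_const, smul_eq_mul, smul_eq_mul, mul_one]
    have h2 : (univ.filter fun xy : F × F => xy.1 ^ (q + 1) + xy.2 ^ (q + 1) = 0).card = 1 + (q ^ 2 - 1) * (q + 1) := by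
      rw [← hA, Nat.card_eq_fintype_card, Fintype.card_subtype]
    have h3 : (univ.filter fun xy : F × F => ¬(xy.1 ^ (q + 1) + xy.2 ^ (q + 1) = 0)).card
        = q ^ 4 - (1 + (q ^ 2 - 1) * (q + 1)) := by
      rw [Finset.filter_not, Finset.card_sdiff_of_subset (Finset.filter_subset _ _), h2, Finset.card_univ]
      congr 1
      rw [Fintype.card_prod, hF]
      ring
    rw [h2, h3]
  -- splitting off the zero vector
  have hzero : (0 : Fin 3 → F) 0 ^ (q + 1) + (0 : Fin 3 → F) 1 ^ (q + 1)
      + (0 : Fin 3 → F) 2 ^ (q + 1) = 0 := by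
    have hne : q + 1 ≠ 0 := Nat.succ_ne_zero q
    simp [zero_pow hne]
  have hNZ : Nat.card {v : Fin 3 → F // v 0 ^ (q + 1) + v 1 ^ (q + 1) + v 2 ^ (q + 1) = 0}
      = Nat.card {v : Fin 3 → F //
          v ≠ 0 ∧ v 0 ^ (q + 1) + v 1 ^ (q + 1) + v 2 ^ (q + 1) = 0} + 1 := by
    rw [Nat.card_eq_fintype_card, Nat.card_eq_fintype_card, Fintype.card_subtype,
      Fintype.card_subtype]
    have h1 : (univ.filter fun v : Fin 3 → F =>
          v 0 ^ (q + 1) + v 1 ^ (q + 1) + v 2 ^ (q + 1) = 0)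
        = insert 0 (univ.filter fun v : Fin 3 → F =>
          v ≠ 0 ∧ v 0 ^ (q + 1) + v 1 ^ (q + 1) + v 2 ^ (q + 1) = 0) := by
      ext v
      simp only [Finset.mem_filter, Finset.mem_univ, true_and, Finset.mem_insert]
      constructor
      · intro hv
        by_cases h : v = 0
        · exact Or.inl h
        · exact Or.inr ⟨h, hv⟩
      · rintro (rfl | ⟨-, hv⟩)
        · exact hzero
        · exact hv
    rw [h1, Finset.card_insert_of_notMem (by simp)]
  -- scaling invariance
  have hscale : ∀ (a : F) (v : Fin 3 → F),
      v 0 ^ (q + 1) + v 1 ^ (q + 1) + v 2 ^ (q + 1) = 0 →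
      (a • v) 0 ^ (q + 1) + (a • v) 1 ^ (q + 1) + (a • v) 2 ^ (q + 1) = 0 := by
    intro a v hv
    simp only [Pi.smul_apply, smul_eq_mul]
    have h1 : (a * v 0) ^ (q + 1) + (a * v 1) ^ (q + 1) + (a * v 2) ^ (q + 1)
        = a ^ (q + 1) * (v 0 ^ (q + 1) + v 1 ^ (q + 1) + v 2 ^ (q + 1)) := by ring
    rw [h1, hv, mul_zero]
  have hkey : ∀ (u : Fˣ) (P : Projectivization F (Fin 3 → F)) h,
      Projectivization.mk F ((u : F) • P.rep) h = P := by
    intro u P h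
    conv_rhs => rw [← P.mk_rep]
    rw [Projectivization.mk_eq_mk_iff]
    exact ⟨u, rfl⟩
  -- the bijection
  let Φ : Fˣ × {P : Projectivization F (Fin 3 → F) //
        P.rep 0 ^ (q + 1) + P.rep 1 ^ (q + 1) + P.rep 2 ^ (q + 1) = 0}
      → {v : Fin 3 → F //
          v ≠ 0 ∧ v 0 ^ (q + 1) + v 1 ^ (q + 1) + v 2 ^ (q + 1) = 0} := fun z =>
    ⟨(z.1 : F) • z.2.1.rep,
      smul_ne_zero (Units.ne_zero z.1) z.2.1.rep_nonzero,
      hscale _ _ z.2.2⟩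
  have hbij : Function.Bijective Φ := by
    constructor
    · rintro ⟨a, P⟩ ⟨b, Q⟩ hab
      have hval : (a : F) • P.1.rep = (b : F) • Q.1.rep := congrArg Subtype.val hab
      have hPQ : P.1 = Q.1 := by
        rw [← hkey a P.1 (smul_ne_zero (Units.ne_zero a) P.1.rep_nonzero),
          ← hkey b Q.1 (smul_ne_zero (Units.ne_zero b) Q.1.rep_nonzero)]
        congr 1
      have hab' : a = b := by
        rw [hPQ] at hval
        have h1 : ((a : F) - (b : F)) • Q.1.rep = 0 := by
          rw [sub_smul, hval, sub_self]
        rcases smul_eq_zero.mp h1 with h | h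
        · exact Units.ext (by rwa [sub_eq_zero] at h)
        · exact absurd h Q.1.rep_nonzero
      exact Prod.ext hab' (Subtype.ext hPQ)
    · rintro ⟨v, hv0, hveq⟩
      obtain ⟨a, ha⟩ := Projectivization.exists_smul_eq_mk_rep F v hv0
      have hpred : (Projectivization.mk F v hv0).rep 0 ^ (q + 1)
          + (Projectivization.mk F v hv0).rep 1 ^ (q + 1)
          + (Projectivization.mk F v hv0).rep 2 ^ (q + 1) = 0 := by
        rw [← ha]
        exact hscale _ _ hveq
      refine ⟨(a⁻¹, ⟨Projectivization.mk F v hv0, hpred⟩), ?_⟩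
      apply Subtype.ext
      show ((a⁻¹ : Fˣ) : F) • (Projectivization.mk F v hv0).rep = v
      rw [← ha]
      show ((a⁻¹ : Fˣ) : F) • ((a : F) • v) = v
      rw [smul_smul, ← Units.val_mul, inv_mul_cancel, Units.val_one, one_smul]
  have hcount : Nat.card Fˣ * Nat.card {P : Projectivization F (Fin 3 → F) //
        P.rep 0 ^ (q + 1) + P.rep 1 ^ (q + 1) + P.rep 2 ^ (q + 1) = 0}
      = Nat.card {v : Fin 3 → F //
          v ≠ 0 ∧ v 0 ^ (q + 1) + v 1 ^ (q + 1) + v 2 ^ (q + 1) = 0} := by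
    rw [← Nat.card_prod]
    exact Nat.card_eq_of_bijective Φ hbij
  have hcardu : Nat.card Fˣ = q ^ 2 - 1 := by
    rw [Nat.card_eq_fintype_card, Fintype.card_units, hF]
  -- final arithmetic
  have h4 : 4 ≤ q ^ 2 := by nlinarith
  have harith : 1 + (q ^ 2 - 1) * (q + 1) + (q ^ 4 - (1 + (q ^ 2 - 1) * (q + 1))) * (q + 1) = (q ^ 2 - 1) * (q ^ 3 + 1) + 1 := by
    have h1q2 : 1 ≤ q ^ 2 := le_trans (by norm_num) h4
    zify [hAle, h1q2]
    ring
  have hT2 : Nat.card {v : Fin 3 → F // v 0 ^ (q + 1) + v 1 ^ (q + 1) + v 2 ^ (q + 1) = 0}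
      = (q ^ 2 - 1) * (q ^ 3 + 1) + 1 := hT.trans harith
  have h5 : Nat.card {v : Fin 3 → F //
        v ≠ 0 ∧ v 0 ^ (q + 1) + v 1 ^ (q + 1) + v 2 ^ (q + 1) = 0}
      = (q ^ 2 - 1) * (q ^ 3 + 1) :=
    Nat.add_right_cancel (hNZ.symm.trans hT2)
  have h6 : (q ^ 2 - 1) * Nat.card {P : Projectivization F (Fin 3 → F) //
        P.rep 0 ^ (q + 1) + P.rep 1 ^ (q + 1) + P.rep 2 ^ (q + 1) = 0}
      = (q ^ 2 - 1) * (q ^ 3 + 1) := by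
    conv_lhs => rw [← hcardu]
    rw [hcount, h5]
  exact Nat.eq_of_mul_eq_mul_left (Nat.sub_pos_of_lt (lt_of_lt_of_le (by norm_num) h4)) h6
end

section
/- Let p be a prime, n ≥ 1, q = p^n, and let F be a finite field with q² elements. Let P = [a : b : c] be a point of PG(2,F) with a^{q+1} + b^{q+1} + c^{q+1} = 0. Then the polar line of P, namely the line with equation a^q X + b^q Y + c^q T = 0, meets the Hermitian curve H_q(F) in exactly one point, namely P itself; that is, the polar line of a rational point of H_q is the tangent line at that point. -/
lemma hermitian_aux (q : ℕ) (F : Type) [Field F] (hq0 : q ≠ 0)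
    (hfr : ∀ s t : F, (s + t) ^ q = s ^ q + t ^ q)
    (a b c x y z : F) (ha : a ≠ 0)
    (h1 : a ^ q * x + b ^ q * y + c ^ q * z = 0)
    (h2 : a ^ (q + 1) + b ^ (q + 1) + c ^ (q + 1) = 0)
    (h3 : x ^ (q + 1) + y ^ (q + 1) + z ^ (q + 1) = 0)
    (h4 : a * x ^ q + b * y ^ q + c * z ^ q = 0) :
    ∃ k : F, x = k * a ∧ y = k * b ∧ z = k * c := by
  have hneg : ∀ t : F, (-t) ^ q = -t ^ q := by
    intro t
    have h := hfr t (-t)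
    rw [add_neg_cancel, zero_pow hq0] at h
    exact eq_neg_of_add_eq_zero_right h.symm
  have hsub : ∀ s t : F, (s - t) ^ q = s ^ q - t ^ q := by
    intro s t
    rw [sub_eq_add_neg, hfr, hneg, sub_eq_add_neg]
  have hu : (a * y - b * x) ^ q = a ^ q * y ^ q - b ^ q * x ^ q := by
    rw [hsub, mul_pow, mul_pow]
  have hw : (a * z - c * x) ^ q = a ^ q * z ^ q - c ^ q * x ^ q := by
    rw [hsub, mul_pow, mul_pow]
  by_cases huv : a * y - b * x = 0 ∧ a * z - c * x = 0
  · obtain ⟨e1, e2⟩ := huv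
    refine ⟨x / a, by field_simp, by field_simp; linear_combination e1, by field_simp; linear_combination e2⟩
  · exfalso
    have hi : (a * y - b * x) * (a ^ q * y ^ q - b ^ q * x ^ q)
        + (a * z - c * x) * (a ^ q * z ^ q - c ^ q * x ^ q) = 0 := by
      linear_combination (a * a ^ q) * h3 + (x * x ^ q) * h2 - (a * x ^ q) * h1 - (a ^ q * x) * h4
    have hii : b * (a ^ q * y ^ q - b ^ q * x ^ q) + c * (a ^ q * z ^ q - c ^ q * x ^ q) = 0 := by
      linear_combination a ^ q * h4 - x ^ q * h2
    have hiii : b ^ q * (a * y - b * x) + c ^ q * (a * z - c * x) = 0 := by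
      linear_combination a * h1 - x * h2
    have hune : a * y - b * x ≠ 0 := by
      intro h0
      apply huv
      refine ⟨h0, ?_⟩
      have h0' : (a ^ q * y ^ q - b ^ q * x ^ q) = 0 := by rw [← hu, h0, zero_pow hq0]
      rw [h0, h0', zero_mul, zero_add] at hi
      rcases mul_eq_zero.mp hi with h | h
      · exact h
      · have : (a * z - c * x) ^ q = 0 := by rw [hw]; exact h
        exact pow_eq_zero_iff hq0 |>.mp this
    have key : a ^ (q + 1) * ((a * y - b * x) * (a ^ q * y ^ q - b ^ q * x ^ q)) = 0 := by
      linear_combination ((a * y - b * x) * (a ^ q * y ^ q - b ^ q * x ^ q)) * h2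
        - (b ^ q * (a * y - b * x)) * hii + (c * (a ^ q * z ^ q - c ^ q * x ^ q)) * hiii
        - (c * c ^ q) * hi
    have key2 : a ^ (q + 1) * ((a * y - b * x) * (a * y - b * x) ^ q) = 0 := by
      rw [hu]; exact key
    rcases mul_eq_zero.mp key2 with h | h
    · exact ha (pow_eq_zero_iff (Nat.succ_ne_zero q) |>.mp h)
    · rcases mul_eq_zero.mp h with h | h
      · exact hune h
      · exact hune (pow_eq_zero_iff hq0 |>.mp h)

/-- Let `q = p ^ n` and `F` be a finite field with `q²` elements. If
`P = [a : b : c]` is a point of `PG(2, F)` lying on the Hermitian curve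
`x^(q+1) + y^(q+1) + t^(q+1) = 0`, then the polar line `a^q X + b^q Y + c^q T = 0` of `P`
meets the Hermitian curve in exactly one point, namely `P` itself. -/
theorem polar_line_of_point_on_hermitian_curve_is_tangent
    (p n q : ℕ) (hp : p.Prime) (hn : 1 ≤ n) (hq : q = p ^ n)
    (F : Type) [Field F] [Fintype F] (hF : Fintype.card F = q ^ 2)
    (a b c : F) (hv : ![a, b, c] ≠ 0)
    (habc : a ^ (q + 1) + b ^ (q + 1) + c ^ (q + 1) = 0) :
    ∀ P : Projectivization F (Fin 3 → F),
      (a ^ q * P.rep 0 + b ^ q * P.rep 1 + c ^ q * P.rep 2 = 0 ∧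
        P.rep 0 ^ (q + 1) + P.rep 1 ^ (q + 1) + P.rep 2 ^ (q + 1) = 0) ↔
      P = Projectivization.mk F ![a, b, c] hv := by
  haveI := Fact.mk hp
  have hq0 : q ≠ 0 := by rw [hq]; exact pow_ne_zero n hp.pos.ne'
  -- characteristic of F is p
  haveI hchar : CharP F p := by
    haveI := ringChar.charP F
    obtain ⟨m, hprime, hcard⟩ := FiniteField.card F (ringChar F)
    have hdvd : ringChar F ∣ p ^ (n * 2) := by
      rw [pow_mul, ← hq, ← hF, hcard]
      exact dvd_pow_self _ m.pos.ne'
    have : ringChar F = p :=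
      (Nat.prime_dvd_prime_iff_eq hprime hp).mp (hprime.dvd_of_dvd_pow hdvd)
    exact this ▸ ringChar.charP F
  haveI : ExpChar F p := ExpChar.prime hp
  have hfr : ∀ s t : F, (s + t) ^ q = s ^ q + t ^ q := by
    intro s t; rw [hq]; exact add_pow_char_pow s t p n
  have hcard2 : ∀ t : F, t ^ (q * q) = t := by
    intro t
    have h := FiniteField.pow_card t
    rwa [hF, pow_two] at h
  have h3v : ¬(a = 0 ∧ b = 0 ∧ c = 0) := by
    rintro ⟨rfl, rfl, rfl⟩
    apply hv
    funext i; fin_cases i <;> rfl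
  intro P
  constructor
  · rintro ⟨hline, hcurve⟩
    have e : (a ^ q * P.rep 0 + b ^ q * P.rep 1 + c ^ q * P.rep 2) ^ q
        = a * (P.rep 0) ^ q + b * (P.rep 1) ^ q + c * (P.rep 2) ^ q := by
      rw [hfr, hfr, mul_pow, mul_pow, mul_pow, ← pow_mul, ← pow_mul, ← pow_mul,
        hcard2, hcard2, hcard2]
    rw [hline, zero_pow hq0] at e
    have h4 := e.symm
    obtain ⟨k, hx, hy, hz⟩ : ∃ k : F, P.rep 0 = k * a ∧ P.rep 1 = k * b ∧ P.rep 2 = k * c := by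
      rcases em (a = 0) with ha | ha
      · rcases em (b = 0) with hb | hb
        · have hc : c ≠ 0 := fun h => h3v ⟨ha, hb, h⟩
          obtain ⟨k, e1, e2, e3⟩ := hermitian_aux q F hq0 hfr c a b
            (P.rep 2) (P.rep 0) (P.rep 1) hc (by linear_combination hline)
            (by linear_combination habc) (by linear_combination hcurve)
            (by linear_combination h4)
          exact ⟨k, e2, e3, e1⟩
        · obtain ⟨k, e1, e2, e3⟩ := hermitian_aux q F hq0 hfr b c a
            (P.rep 1) (P.rep 2) (P.rep 0) hb (by linear_combination hline)
            (by linear_combination habc) (by linear_combination hcurve)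
            (by linear_combination h4)
          exact ⟨k, e3, e1, e2⟩
      · obtain ⟨k, e1, e2, e3⟩ := hermitian_aux q F hq0 hfr a b c
          (P.rep 0) (P.rep 1) (P.rep 2) ha hline habc hcurve h4
        exact ⟨k, e1, e2, e3⟩
    have hk : k ≠ 0 := by
      rintro rfl
      apply P.rep_nonzero
      funext i
      fin_cases i
      · simpa using hx
      · simpa using hy
      · simpa using hz
    rw [← P.mk_rep, Projectivization.mk_eq_mk_iff]
    refine ⟨Units.mk0 k hk, ?_⟩
    funext i
    fin_cases i
    · simpa [Units.smul_def] using hx.symm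
    · simpa [Units.smul_def] using hy.symm
    · simpa [Units.smul_def] using hz.symm
  · rintro rfl
    obtain ⟨u, hu⟩ := (Projectivization.mk_eq_mk_iff F _ _
      (Projectivization.rep_nonzero _) hv).mp
      (Projectivization.mk_rep (Projectivization.mk F ![a, b, c] hv))
    have h0 : (Projectivization.mk F ![a, b, c] hv).rep 0 = u * a := by
      rw [← hu]; simp [Units.smul_def]
    have h1 : (Projectivization.mk F ![a, b, c] hv).rep 1 = u * b := by
      rw [← hu]; simp [Units.smul_def]
    have h2 : (Projectivization.mk F ![a, b, c] hv).rep 2 = u * c := by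
      rw [← hu]; simp [Units.smul_def]
    rw [h0, h1, h2]
    constructor
    · linear_combination (u : F) * habc
    · linear_combination ((u : F) ^ (q + 1)) * habc
end

section
/- Let p be a prime, n ≥ 1, q = p^n, and let F be a finite field with q² elements. Let R = [a : b : c] be a point of PG(2,F) with a^{q+1} + b^{q+1} + c^{q+1} ≠ 0, i.e. a point not on the Hermitian curve. Then the polar line of R, namely the line with equation a^q X + b^q Y + c^q T = 0, contains exactly q + 1 points of H_q(F); that is, the polar line of a rational point off H_q is a chord of H_q(F). -/
open Finset

lemma two_le_q (p n q : ℕ) (hp : p.Prime) (hn : 1 ≤ n) (hq : q = p ^ n) : 2 ≤ q := by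
  subst hq
  exact hp.two_le.trans (Nat.le_self_pow (by omega) p)

lemma charP_of (p n q : ℕ) (hp : p.Prime) (hq : q = p ^ n)
    (F : Type) [Field F] [Fintype F] (hF : Fintype.card F = q ^ 2) : CharP F p := by
  have h0 : ((Fintype.card F : ℕ) : F) = 0 := FiniteField.cast_card_eq_zero F
  have hr : (ringChar F).Prime := CharP.char_is_prime F (ringChar F)
  have hdvd : ringChar F ∣ Fintype.card F := (CharP.cast_eq_zero_iff F (ringChar F) _).1 h0
  rw [hF, hq, ← pow_mul] at hdvd
  have h1 := hr.dvd_of_dvd_pow hdvd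
  have h2 : ringChar F = p := ((Nat.prime_dvd_prime_iff_eq hr hp).1 h1)
  rw [← h2]
  exact ringChar.charP F

lemma frob_add (p n q : ℕ) (hp : p.Prime) (hq : q = p ^ n)
    (F : Type) [Field F] [Fintype F] (hF : Fintype.card F = q ^ 2) (x y : F) :
    (x + y) ^ q = x ^ q + y ^ q := by
  have := charP_of p n q hp hq F hF
  have : Fact p.Prime := ⟨hp⟩
  subst hq
  exact add_pow_char_pow x y (p := p) (n := n)

lemma frob_neg (p n q : ℕ) (hp : p.Prime) (hq : q = p ^ n)
    (F : Type) [Field F] [Fintype F] (hF : Fintype.card F = q ^ 2) (x : F) :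
    (-x) ^ q = -(x ^ q) := by
  have := charP_of p n q hp hq F hF
  have : Fact p.Prime := ⟨hp⟩
  subst hq
  rw [neg_eq_neg_one_mul, mul_pow, neg_one_pow_char_pow F p n, neg_one_mul]

lemma pow_qq (q : ℕ) (F : Type) [Field F] [Fintype F] (hF : Fintype.card F = q ^ 2) (x : F) :
    (x ^ q) ^ q = x := by
  rw [← pow_mul, ← pow_two, ← hF, FiniteField.pow_card]
lemma pow_eq_card_le (F : Type) [Field F] [Fintype F] [DecidableEq F] (m : ℕ) (hm : 0 < m) (a : F) :
    (univ.filter fun x : F => x ^ m = a).card ≤ m := by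
  have h1 : (univ.filter fun x : F => x ^ m = a) ⊆ (Polynomial.nthRoots m a).toFinset := by
    intro x hx
    simp only [mem_filter] at hx
    rw [Multiset.mem_toFinset, Polynomial.mem_nthRoots hm]
    exact hx.2
  exact (Finset.card_le_card h1).trans
    ((Multiset.toFinset_card_le _).trans (by simpa using Polynomial.card_nthRoots m a))

lemma norm_fiber_count (p n q : ℕ) (hp : p.Prime) (hn : 1 ≤ n) (hq : q = p ^ n)
    (F : Type) [Field F] [Fintype F] [DecidableEq F] (hF : Fintype.card F = q ^ 2)
    (μ : F) (hμ0 : μ ≠ 0) (hμ : μ ^ q = μ) :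
    (univ.filter fun x : F => x ^ (q + 1) = μ).card = q + 1 := by
  have hq2 : 2 ≤ q := by
    subst hq; exact hp.two_le.trans (Nat.le_self_pow (by omega) p)
  set S : Finset F := univ.filter (fun μ : F => μ ^ (q - 1) = 1) with hS
  have hScard : S.card ≤ q - 1 := pow_eq_card_le F (q - 1) (by omega) 1
  have hSmem : ∀ x : F, x ≠ 0 → x ^ (q + 1) ∈ S := by
    intro x hx
    simp only [hS, mem_filter, mem_univ, true_and]
    rw [← pow_mul]
    have harith : (q + 1) * (q - 1) = Fintype.card F - 1 := by
      rw [hF]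
      obtain ⟨k, rfl⟩ : ∃ k, q = k + 2 := ⟨q - 2, by omega⟩
      have h1 : (k+2)^2 = k*k+4*k+4 := by ring
      have h2 : (k+2+1) * (k+2-1) = k*k+4*k+3 := by
        rw [show k+2-1 = k+1 from rfl]; ring
      omega
    rw [harith]
    exact FiniteField.pow_card_sub_one_eq_one x hx
  have hsum : (Finset.univ.erase (0:F)).card
      = ∑ μ ∈ S, ((Finset.univ.erase (0:F)).filter (fun x => x ^ (q+1) = μ)).card :=
    Finset.card_eq_sum_card_fiberwise (fun x hx => hSmem x (Finset.ne_of_mem_erase hx))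
  have hfib : ∀ μ ∈ S, ((Finset.univ.erase (0:F)).filter (fun x => x ^ (q+1) = μ))
      = univ.filter (fun x : F => x ^ (q+1) = μ) := by
    intro μ hμS
    have hμS0 : μ ≠ 0 := by
      simp only [hS, mem_filter] at hμS
      intro h; rw [h] at hμS
      simp only [zero_pow (by omega : q - 1 ≠ 0)] at hμS
      exact zero_ne_one hμS.2
    ext x
    simp only [mem_filter, mem_erase, mem_univ, true_and, and_true]
    constructor
    · rintro ⟨-, h⟩; exact h
    · intro h
      refine ⟨fun h0 => hμS0 ?_, h⟩
      rw [h0] at h; rw [← h]; simp [zero_pow]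
  rw [Finset.sum_congr rfl (fun μ hμS => by rw [hfib μ hμS])] at hsum
  have hcard_erase : (Finset.univ.erase (0:F)).card = q^2 - 1 := by
    rw [Finset.card_erase_of_mem (mem_univ 0), Finset.card_univ, hF]
  rw [hcard_erase] at hsum
  have hμS : μ ∈ S := by
    simp only [hS, mem_filter, mem_univ, true_and]
    have h1 : μ ^ (q - 1) * μ = μ ^ q := by
      rw [← pow_succ]; congr 1; omega
    rw [hμ] at h1
    exact mul_right_cancel₀ hμ0 (by rw [h1, one_mul])
  have hbound : ∀ ν ∈ S, (univ.filter fun x : F => x ^ (q+1) = ν).card ≤ q + 1 :=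
    fun ν _ => pow_eq_card_le F (q+1) (by omega) ν
  rw [← Finset.add_sum_erase _ _ hμS] at hsum
  have hrest : ∑ ν ∈ S.erase μ, (univ.filter fun x : F => x ^ (q+1) = ν).card
      ≤ (S.erase μ).card * (q + 1) := by
    calc ∑ ν ∈ S.erase μ, (univ.filter fun x : F => x ^ (q+1) = ν).card
        ≤ ∑ _ν ∈ S.erase μ, (q+1) :=
          Finset.sum_le_sum (fun ν hν => hbound ν (Finset.mem_of_mem_erase hν))
      _ = (S.erase μ).card * (q + 1) := by rw [Finset.sum_const, smul_eq_mul]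
  have hec : (S.erase μ).card ≤ q - 2 := by
    rw [Finset.card_erase_of_mem hμS]; omega
  have hm2 : (S.erase μ).card * (q+1) ≤ (q-2)*(q+1) := Nat.mul_le_mul_right _ hec
  have hup := hbound μ hμS
  have key : q^2 - 1 = (q-2)*(q+1) + (q+1) := by
    obtain ⟨k, rfl⟩ : ∃ k, q = k + 2 := ⟨q - 2, by omega⟩
    have h1 : (k+2)^2 = k*k+4*k+4 := by ring
    have h2 : (k+2-2)*(k+2+1) = k*k+3*k := by
      rw [show k+2-2 = k from rfl]; ring
    omega
  omega
lemma pow_q1_fixed (q : ℕ) (F : Type) [Field F] [Fintype F] (hF : Fintype.card F = q ^ 2) (x : F) :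
    (x ^ (q + 1)) ^ q = x ^ (q + 1) := by
  rw [← pow_mul, show (q+1)*q = q*q + q by ring, pow_add, pow_mul, pow_qq q F hF,
    ← pow_succ']

lemma binary_count_main (p n q : ℕ) (hp : p.Prime) (hn : 1 ≤ n) (hq : q = p ^ n)
    (F : Type) [Field F] [Fintype F] [DecidableEq F] (hF : Fintype.card F = q ^ 2)
    (e f g : F) (he : e ^ q = e) (hg : g ^ q = g) (hd : e * g - f ^ (q + 1) ≠ 0)
    (he0 : e ≠ 0) :
    (univ.filter fun v : F × F =>
      e * v.1 ^ (q+1) + f * v.1 * v.2 ^ q + f ^ q * v.1 ^ q * v.2 + g * v.2 ^ (q+1) = 0).card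
      = (q + 1) * (q ^ 2 - 1) + 1 := by
  set d : F := e * g - f ^ (q + 1) with hddef
  have hfq : (f ^ (q+1)) ^ q = f ^ (q+1) := pow_q1_fixed q F hF f
  have hdq : d ^ q = d := by
    rw [hddef, sub_eq_add_neg, frob_add p n q hp hq F hF, frob_neg p n q hp hq F hF,
      mul_pow, he, hg, hfq, ← sub_eq_add_neg]
  -- key algebraic identity
  have expand : ∀ x y : F,
      (e * x + f ^ q * y) ^ (q+1) + d * y ^ (q+1)
        = e * (e * x ^ (q+1) + f * x * y ^ q + f ^ q * x ^ q * y + g * y ^ (q+1)) := by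
    intro x y
    have h1 : (e * x + f ^ q * y) ^ q = e * x ^ q + f * y ^ q := by
      rw [frob_add p n q hp hq F hF, mul_pow, mul_pow, he, pow_qq q F hF]
    have e2 : ∀ u : F, u ^ (q+1) = u ^ q * u := fun u => pow_succ u q
    rw [e2 (e * x + f ^ q * y), h1, e2 x, e2 y, hddef, e2 f]
    ring
  -- transport along the substitution u = e x + f^q y
  have step1 : (univ.filter fun v : F × F =>
      e * v.1 ^ (q+1) + f * v.1 * v.2 ^ q + f ^ q * v.1 ^ q * v.2 + g * v.2 ^ (q+1) = 0).card
      = (univ.filter fun w : F × F => w.1 ^ (q+1) + d * w.2 ^ (q+1) = 0).card := by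
    apply Finset.card_nbij' (fun v => (e * v.1 + f ^ q * v.2, v.2))
      (fun w => ((w.1 - f ^ q * w.2) / e, w.2))
    · intro v hv
      simp only [Finset.mem_coe, mem_filter, mem_univ, true_and] at hv ⊢
      rw [expand, hv, mul_zero]
    · intro w hw
      simp only [Finset.mem_coe, mem_filter, mem_univ, true_and] at hw ⊢
      have hmul : e * ((w.1 - f ^ q * w.2) / e) + f ^ q * w.2 = w.1 := by
        field_simp
        ring
      have := expand ((w.1 - f ^ q * w.2) / e) w.2
      rw [hmul, hw] at this
      exact (mul_eq_zero.mp this.symm).resolve_left he0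
    · intro v _
      simp only
      rw [add_sub_cancel_right, mul_div_cancel_left₀ _ he0]
    · intro w _
      simp only
      rw [mul_div_cancel₀ _ he0]
      simp
  rw [step1]
  -- now count pairs (u, y) with u^(q+1) = -(d y^(q+1))
  have step2 : (univ.filter fun w : F × F => w.1 ^ (q+1) + d * w.2 ^ (q+1) = 0).card
      = ∑ y : F, (univ.filter fun u : F => u ^ (q+1) + d * y ^ (q+1) = 0).card := by
    rw [← Fintype.card_subtype]
    have eq1 : {w : F × F // w.1 ^ (q+1) + d * w.2 ^ (q+1) = 0}
        ≃ (Σ y : F, {u : F // u ^ (q+1) + d * y ^ (q+1) = 0}) :=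
      { toFun := fun w => ⟨w.1.2, w.1.1, w.2⟩
        invFun := fun s => ⟨(s.2.1, s.1), s.2.2⟩
        left_inv := fun w => rfl
        right_inv := fun s => rfl }
    rw [Fintype.card_congr eq1, Fintype.card_sigma]
    congr 1
    ext y
    rw [Fintype.card_subtype]
  rw [step2]
  have hzero : (univ.filter fun u : F => u ^ (q+1) + d * (0:F) ^ (q+1) = 0).card = 1 := by
    have : (univ.filter fun u : F => u ^ (q+1) + d * (0:F) ^ (q+1) = 0) = {0} := by
      ext u
      simp only [mem_filter, mem_univ, true_and, mem_singleton,
        zero_pow (Nat.succ_ne_zero q), mul_zero, add_zero]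
      rw [pow_eq_zero_iff (Nat.succ_ne_zero q)]
    rw [this, card_singleton]
  have hq2 : 2 ≤ q := by
    subst hq; exact hp.two_le.trans (Nat.le_self_pow (by omega) p)
  have hne : ∀ y : F, y ≠ 0 →
      (univ.filter fun u : F => u ^ (q+1) + d * y ^ (q+1) = 0).card = q + 1 := by
    intro y hy
    have hμ0 : -(d * y ^ (q+1)) ≠ 0 := by
      simp only [neg_ne_zero]
      exact mul_ne_zero hd (pow_ne_zero _ hy)
    have hμq : (-(d * y ^ (q+1))) ^ q = -(d * y ^ (q+1)) := by
      rw [frob_neg p n q hp hq F hF, mul_pow, hdq, pow_q1_fixed q F hF]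
    have hnf := norm_fiber_count p n q hp hn hq F hF (-(d * y ^ (q+1))) hμ0 hμq
    have hset : (univ.filter fun u : F => u ^ (q+1) + d * y ^ (q+1) = 0)
        = (univ.filter fun u : F => u ^ (q+1) = -(d * y ^ (q+1))) := by
      ext u
      simp only [mem_filter, mem_univ, true_and, add_eq_zero_iff_eq_neg]
    rw [hset, hnf]
  rw [← Finset.add_sum_erase _ _ (mem_univ (0:F)), hzero]
  rw [Finset.sum_congr rfl (fun y hy => hne y (Finset.ne_of_mem_erase hy))]
  rw [Finset.sum_const, smul_eq_mul, Finset.card_erase_of_mem (mem_univ 0), card_univ, hF]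
  rw [mul_comm]
  omega
lemma binary_count_g (p n q : ℕ) (hp : p.Prime) (hn : 1 ≤ n) (hq : q = p ^ n)
    (F : Type) [Field F] [Fintype F] [DecidableEq F] (hF : Fintype.card F = q ^ 2)
    (e f g : F) (he : e ^ q = e) (hg : g ^ q = g) (hd : e * g - f ^ (q + 1) ≠ 0)
    (hg0 : g ≠ 0) :
    (univ.filter fun v : F × F =>
      e * v.1 ^ (q+1) + f * v.1 * v.2 ^ q + f ^ q * v.1 ^ q * v.2 + g * v.2 ^ (q+1) = 0).card
      = (q + 1) * (q ^ 2 - 1) + 1 := by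
  have hfq : (f ^ q) ^ (q + 1) = f ^ (q + 1) := by
    rw [← pow_mul, mul_comm, pow_mul, pow_q1_fixed q F hF]
  have hd' : g * e - (f ^ q) ^ (q + 1) ≠ 0 := by
    rw [hfq, mul_comm]; exact hd
  have key := binary_count_main p n q hp hn hq F hF g (f ^ q) e hg he hd' hg0
  rw [← key]
  apply Finset.card_nbij' (fun v => (v.2, v.1)) (fun v => (v.2, v.1))
  · intro v hv
    simp only [Finset.mem_coe, mem_filter, mem_univ, true_and] at hv ⊢
    rw [pow_qq q F hF]
    linear_combination hv
  · intro v hv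
    simp only [Finset.mem_coe, mem_filter, mem_univ, true_and] at hv ⊢
    rw [pow_qq q F hF] at hv
    linear_combination hv
  · intro v _; rfl
  · intro v _; rfl

lemma binary_count (p n q : ℕ) (hp : p.Prime) (hn : 1 ≤ n) (hq : q = p ^ n)
    (F : Type) [Field F] [Fintype F] [DecidableEq F] (hF : Fintype.card F = q ^ 2)
    (e f g : F) (he : e ^ q = e) (hg : g ^ q = g) (hd : e * g - f ^ (q + 1) ≠ 0) :
    (univ.filter fun v : F × F =>
      e * v.1 ^ (q+1) + f * v.1 * v.2 ^ q + f ^ q * v.1 ^ q * v.2 + g * v.2 ^ (q+1) = 0).card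
      = (q + 1) * (q ^ 2 - 1) + 1 := by
  have hq2 : 2 ≤ q := by
    subst hq; exact hp.two_le.trans (Nat.le_self_pow (by omega) p)
  by_cases he0 : e ≠ 0
  · exact binary_count_main p n q hp hn hq F hF e f g he hg hd he0
  by_cases hg0 : g ≠ 0
  · exact binary_count_g p n q hp hn hq F hF e f g he hg hd hg0
  push_neg at he0 hg0
  subst he0; subst hg0
  have hf0 : f ≠ 0 := by
    intro h; rw [h] at hd
    simp [zero_pow (Nat.succ_ne_zero q)] at hd
  -- find w with w + w^q ≠ 0
  have hex : ∃ w : F, w + w ^ q ≠ 0 := by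
    by_contra h
    push_neg at h
    have hall : ∀ x : F, x ≠ 0 → x ^ (q - 1) = -1 := by
      intro x hx
      have h1 : x ^ q = -x := by have := h x; linear_combination this
      have h2 : x ^ (q - 1) * x = x ^ q := by
        rw [← pow_succ]; congr 1; omega
      rw [h1] at h2
      have : x ^ (q - 1) * x = -1 * x := by rw [h2]; ring
      exact mul_right_cancel₀ hx this
    have hsub : Finset.univ.erase (0 : F) ⊆ univ.filter (fun x : F => x ^ (q - 1) = -1) := by
      intro x hx
      simp only [mem_filter, mem_univ, true_and]
      exact hall x (Finset.ne_of_mem_erase hx)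
    have hcard := (Finset.card_le_card hsub).trans (pow_eq_card_le F (q - 1) (by omega) (-1))
    rw [Finset.card_erase_of_mem (mem_univ 0), card_univ, hF] at hcard
    have h3 : 2 * q ≤ q * q := Nat.mul_le_mul_right q hq2
    have h4 : q ^ 2 = q * q := sq q
    omega
  obtain ⟨w, hw⟩ := hex
  obtain ⟨s, hfs⟩ : ∃ s : F, f * s = w := ⟨w / f, by field_simp⟩
  have hfsq : f ^ q * s ^ q = w ^ q := by rw [← mul_pow, hfs]
  have hgw : (w + w ^ q) ^ q = w + w ^ q := by
    rw [frob_add p n q hp hq F hF, pow_qq q F hF, add_comm]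
  have hd' : (0 : F) * (w + w ^ q) - f ^ (q + 1) ≠ 0 := by
    rw [zero_mul]
    simpa using hd
  have key := binary_count_g p n q hp hn hq F hF 0 f (w + w ^ q) he hgw hd' hw
  rw [← key]
  have hsubq : ∀ x y : F, (x - s * y) ^ q = x ^ q - s ^ q * y ^ q := by
    intro x y
    rw [sub_eq_add_neg, frob_add p n q hp hq F hF, frob_neg p n q hp hq F hF, mul_pow,
      ← sub_eq_add_neg]
  apply Finset.card_nbij' (fun v => (v.1 - s * v.2, v.2)) (fun v => (v.1 + s * v.2, v.2))
  · intro v hv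
    simp only [Finset.mem_coe, mem_filter, mem_univ, true_and] at hv ⊢
    rw [zero_mul] at hv ⊢
    rw [hsubq, pow_succ v.2 q]
    rw [pow_succ v.2 q] at hv
    linear_combination hv - (v.2 ^ q * v.2) * hfs - (v.2 ^ q * v.2) * hfsq
  · intro v hv
    simp only [Finset.mem_coe, mem_filter, mem_univ, true_and] at hv ⊢
    rw [zero_mul] at hv ⊢
    have haddq : (v.1 + s * v.2) ^ q = v.1 ^ q + s ^ q * v.2 ^ q := by
      rw [frob_add p n q hp hq F hF, mul_pow]
    rw [haddq, pow_succ v.2 q]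
    rw [pow_succ v.2 q] at hv
    linear_combination hv + (v.2 ^ q * v.2) * hfs + (v.2 ^ q * v.2) * hfsq
  · intro v _; simp
  · intro v _; simp
/-- ternary count, case `c ≠ 0` -/
lemma tern_count_c (p n q : ℕ) (hp : p.Prime) (hn : 1 ≤ n) (hq : q = p ^ n)
    (F : Type) [Field F] [Fintype F] [DecidableEq F] (hF : Fintype.card F = q ^ 2)
    (a b c : F) (hc : c ≠ 0)
    (habc : a ^ (q + 1) + b ^ (q + 1) + c ^ (q + 1) ≠ 0) :
    (univ.filter fun v : F × F × F =>
      (a ^ q * v.1 + b ^ q * v.2.1 + c ^ q * v.2.2 = 0 ∧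
        v.1 ^ (q+1) + v.2.1 ^ (q+1) + v.2.2 ^ (q+1) = 0) ∧ v ≠ 0).card
      = (q + 1) * (q ^ 2 - 1) := by
  have hcq : (c : F) ^ q ≠ 0 := pow_ne_zero _ hc
  have habq : (a ^ q * b) ^ q = a * b ^ q := by rw [mul_pow, pow_qq q F hF]
  have he : (c ^ (q+1) + a ^ (q+1)) ^ q = c ^ (q+1) + a ^ (q+1) := by
    rw [frob_add p n q hp hq F hF, pow_q1_fixed q F hF, pow_q1_fixed q F hF]
  have hg : (c ^ (q+1) + b ^ (q+1)) ^ q = c ^ (q+1) + b ^ (q+1) := by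
    rw [frob_add p n q hp hq F hF, pow_q1_fixed q F hF, pow_q1_fixed q F hF]
  have hfq1 : (a ^ q * b) ^ (q+1) = a ^ (q+1) * b ^ (q+1) := by
    rw [mul_pow]
    congr 1
    rw [← pow_mul, mul_comm q (q+1), pow_mul, pow_q1_fixed q F hF]
  have hd : (c ^ (q+1) + a ^ (q+1)) * (c ^ (q+1) + b ^ (q+1)) - (a ^ q * b) ^ (q+1) ≠ 0 := by
    rw [hfq1]
    have : (c ^ (q+1) + a ^ (q+1)) * (c ^ (q+1) + b ^ (q+1)) - a ^ (q+1) * b ^ (q+1)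
        = c ^ (q+1) * (a ^ (q+1) + b ^ (q+1) + c ^ (q+1)) := by ring
    rw [this]
    exact mul_ne_zero (pow_ne_zero _ hc) habc
  have hbin := binary_count p n q hp hn hq F hF
    (c ^ (q+1) + a ^ (q+1)) (a ^ q * b) (c ^ (q+1) + b ^ (q+1)) he hg hd
  -- remove the zero vector from the binary count
  have hzero_mem : ((0,0) : F × F) ∈ (univ.filter fun v : F × F =>
      (c ^ (q+1) + a ^ (q+1)) * v.1 ^ (q+1) + (a ^ q * b) * v.1 * v.2 ^ q
        + (a ^ q * b) ^ q * v.1 ^ q * v.2 + (c ^ (q+1) + b ^ (q+1)) * v.2 ^ (q+1) = 0) := by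
    simp [zero_pow (Nat.succ_ne_zero q), zero_pow (show q ≠ 0 by
      subst hq; exact pow_ne_zero n hp.pos.ne')]
  have hP2 : (univ.filter fun v : F × F =>
      ((c ^ (q+1) + a ^ (q+1)) * v.1 ^ (q+1) + (a ^ q * b) * v.1 * v.2 ^ q
        + (a ^ q * b) ^ q * v.1 ^ q * v.2 + (c ^ (q+1) + b ^ (q+1)) * v.2 ^ (q+1) = 0) ∧ v ≠ 0).card
      = (q + 1) * (q ^ 2 - 1) := by
    have hset : (univ.filter fun v : F × F =>
        ((c ^ (q+1) + a ^ (q+1)) * v.1 ^ (q+1) + (a ^ q * b) * v.1 * v.2 ^ q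
          + (a ^ q * b) ^ q * v.1 ^ q * v.2 + (c ^ (q+1) + b ^ (q+1)) * v.2 ^ (q+1) = 0) ∧ v ≠ 0)
        = ((univ.filter fun v : F × F =>
        (c ^ (q+1) + a ^ (q+1)) * v.1 ^ (q+1) + (a ^ q * b) * v.1 * v.2 ^ q
          + (a ^ q * b) ^ q * v.1 ^ q * v.2 + (c ^ (q+1) + b ^ (q+1)) * v.2 ^ (q+1) = 0)).erase 0 := by
      ext v
      simp only [mem_filter, mem_univ, true_and, mem_erase]
      tauto
    rw [hset, Finset.card_erase_of_mem (by exact_mod_cast hzero_mem), hbin]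
    simp
  rw [← hP2]
  -- bijection between the 3-var solution set and the 2-var solution set
  apply Finset.card_nbij' (fun v : F × F × F => (v.1, v.2.1))
    (fun u : F × F => (u.1, u.2, -((a ^ q * u.1 + b ^ q * u.2) / c ^ q)))
  · rintro ⟨x, y, z⟩ hv
    simp only [Finset.mem_coe, mem_filter, mem_univ, true_and] at hv ⊢
    obtain ⟨⟨hL, hH⟩, hne⟩ := hv
    constructor
    · -- B(x,y) = 0
      have hLq : a * x ^ q + b * y ^ q + c * z ^ q = 0 := by
        have h1 := congrArg (· ^ q) hL
        rw [frob_add p n q hp hq F hF, frob_add p n q hp hq F hF, mul_pow, mul_pow, mul_pow,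
          pow_qq q F hF, pow_qq q F hF, pow_qq q F hF, zero_pow (show q ≠ 0 by
            subst hq; exact pow_ne_zero n hp.pos.ne')] at h1
        exact h1
      rw [habq]
      simp only [pow_succ] at hH ⊢
      linear_combination (c ^ q * c) * hH + (a * x ^ q + b * y ^ q) * hL - (c ^ q * z) * hLq
    · -- (x,y) ≠ 0
      intro h0
      apply hne
      have hx : x = 0 := by simpa using congrArg Prod.fst h0
      have hy : y = 0 := by simpa using congrArg Prod.snd h0
      have hz : z = 0 := by
        rw [hx, hy] at hL
        simp only [mul_zero, zero_add] at hL
        exact (mul_eq_zero.mp hL).resolve_left hcq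
      simp [hx, hy, hz, Prod.ext_iff]
  · rintro ⟨x, y⟩ hu
    simp only [Finset.mem_coe, mem_filter, mem_univ, true_and] at hu ⊢
    obtain ⟨hB, hne⟩ := hu
    have hL : a ^ q * x + b ^ q * y + c ^ q * (-((a ^ q * x + b ^ q * y) / c ^ q)) = 0 := by
      field_simp
      ring
    refine ⟨⟨hL, ?_⟩, ?_⟩
    · -- H = 0
      set z : F := -((a ^ q * x + b ^ q * y) / c ^ q) with hzdef
      have hLq : a * x ^ q + b * y ^ q + c * z ^ q = 0 := by
        have h1 := congrArg (· ^ q) hL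
        rw [frob_add p n q hp hq F hF, frob_add p n q hp hq F hF, mul_pow, mul_pow, mul_pow,
          pow_qq q F hF, pow_qq q F hF, pow_qq q F hF, zero_pow (show q ≠ 0 by
            subst hq; exact pow_ne_zero n hp.pos.ne')] at h1
        exact h1
      have hkey : (c ^ q * c) * (x ^ (q+1) + y ^ (q+1) + z ^ (q+1)) = 0 := by
        rw [habq] at hB
        simp only [pow_succ] at hB ⊢
        linear_combination hB - (a * x ^ q + b * y ^ q) * hL + (c ^ q * z) * hLq
      have hcc : (c : F) ^ q * c ≠ 0 := mul_ne_zero hcq hc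
      exact (mul_eq_zero.mp hkey).resolve_left hcc
    · -- nonzero
      intro h0
      apply hne
      have hx : x = 0 := by simpa using congrArg Prod.fst h0
      have hy : y = 0 := by simpa using congrArg (fun v : F × F × F => v.2.1) h0
      simp [hx, hy, Prod.ext_iff]
  · rintro ⟨x, y, z⟩ hv
    simp only [Finset.mem_coe, mem_filter, mem_univ, true_and] at hv
    obtain ⟨⟨hL, hH⟩, hne⟩ := hv
    have h3 : -((a ^ q * x + b ^ q * y) / c ^ q) = z := by
      field_simp
      linear_combination -hL
    simp only [h3]
  · rintro ⟨x, y⟩ _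
    rfl
lemma cyc_shift (q : ℕ) (F : Type) [Field F] [Fintype F] [DecidableEq F] (a b c : F) :
    (univ.filter fun v : F × F × F =>
      (a ^ q * v.1 + b ^ q * v.2.1 + c ^ q * v.2.2 = 0 ∧
        v.1 ^ (q+1) + v.2.1 ^ (q+1) + v.2.2 ^ (q+1) = 0) ∧ v ≠ 0).card
    = (univ.filter fun v : F × F × F =>
      (c ^ q * v.1 + a ^ q * v.2.1 + b ^ q * v.2.2 = 0 ∧
        v.1 ^ (q+1) + v.2.1 ^ (q+1) + v.2.2 ^ (q+1) = 0) ∧ v ≠ 0).card := by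
  apply Finset.card_nbij' (fun v : F × F × F => (v.2.2, v.1, v.2.1))
    (fun v : F × F × F => (v.2.1, v.2.2, v.1))
  · rintro ⟨x, y, z⟩ hv
    simp only [Finset.mem_coe, mem_filter, mem_univ, true_and, Prod.ext_iff, Prod.mk_eq_zero, ne_eq,
      not_and] at hv ⊢
    obtain ⟨⟨h1, h2⟩, h3⟩ := hv
    refine ⟨⟨by linear_combination h1, by linear_combination h2⟩, by tauto⟩
  · rintro ⟨x, y, z⟩ hv
    simp only [Finset.mem_coe, mem_filter, mem_univ, true_and, Prod.ext_iff, Prod.mk_eq_zero, ne_eq,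
      not_and] at hv ⊢
    obtain ⟨⟨h1, h2⟩, h3⟩ := hv
    refine ⟨⟨by linear_combination h1, by linear_combination h2⟩, by tauto⟩
  · rintro ⟨x, y, z⟩ _; rfl
  · rintro ⟨x, y, z⟩ _; rfl

lemma tern_count (p n q : ℕ) (hp : p.Prime) (hn : 1 ≤ n) (hq : q = p ^ n)
    (F : Type) [Field F] [Fintype F] [DecidableEq F] (hF : Fintype.card F = q ^ 2)
    (a b c : F)
    (habc : a ^ (q + 1) + b ^ (q + 1) + c ^ (q + 1) ≠ 0) :
    (univ.filter fun v : F × F × F =>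
      (a ^ q * v.1 + b ^ q * v.2.1 + c ^ q * v.2.2 = 0 ∧
        v.1 ^ (q+1) + v.2.1 ^ (q+1) + v.2.2 ^ (q+1) = 0) ∧ v ≠ 0).card
      = (q + 1) * (q ^ 2 - 1) := by
  by_cases hc : c ≠ 0
  · exact tern_count_c p n q hp hn hq F hF a b c hc habc
  push_neg at hc
  by_cases hb : b ≠ 0
  · rw [cyc_shift]
    exact tern_count_c p n q hp hn hq F hF c a b hb (fun h => habc (by linear_combination h))
  push_neg at hb
  have ha : a ≠ 0 := by
    intro h
    apply habc
    rw [h, hb, hc, zero_pow (Nat.succ_ne_zero q)]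
    ring
  rw [cyc_shift, cyc_shift]
  exact tern_count_c p n q hp hn hq F hF b c a ha (fun h => habc (by linear_combination h))

/-- Let `q = p ^ n` and `F` be a finite field with `q²` elements. If
`R = [a : b : c]` is a point of `PG(2, F)` not lying on the Hermitian curve
`x^(q+1) + y^(q+1) + t^(q+1) = 0`, then its polar line `a^q X + b^q Y + c^q T = 0` contains
exactly `q + 1` points of the Hermitian curve, i.e. it is a chord of `H_q(F)`. -/
theorem polar_line_of_point_off_hermitian_curve_is_chord
    (p n q : ℕ) (hp : p.Prime) (hn : 1 ≤ n) (hq : q = p ^ n)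
    (F : Type) [Field F] [Fintype F] (hF : Fintype.card F = q ^ 2)
    (a b c : F) (hv : ![a, b, c] ≠ 0)
    (habc : a ^ (q + 1) + b ^ (q + 1) + c ^ (q + 1) ≠ 0) :
    Nat.card {P : Projectivization F (Fin 3 → F) //
        a ^ q * P.rep 0 + b ^ q * P.rep 1 + c ^ q * P.rep 2 = 0 ∧
        P.rep 0 ^ (q + 1) + P.rep 1 ^ (q + 1) + P.rep 2 ^ (q + 1) = 0} = q + 1 := by
  classical
  have hq2 : 2 ≤ q := by
    subst hq; exact hp.two_le.trans (Nat.le_self_pow (by omega) p)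
  -- Step A : count nonzero solution vectors in `Fin 3 → F`
  have hvec : (univ.filter fun v : Fin 3 → F =>
      (a ^ q * v 0 + b ^ q * v 1 + c ^ q * v 2 = 0 ∧
        v 0 ^ (q+1) + v 1 ^ (q+1) + v 2 ^ (q+1) = 0) ∧ v ≠ 0).card
      = (q + 1) * (q ^ 2 - 1) := by
    rw [← tern_count p n q hp hn hq F hF a b c habc]
    apply Finset.card_nbij' (fun v : Fin 3 → F => (v 0, v 1, v 2))
      (fun t : F × F × F => ![t.1, t.2.1, t.2.2])
    · intro v hv'
      simp only [Finset.mem_coe, mem_filter, mem_univ, true_and] at hv' ⊢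
      obtain ⟨⟨h1, h2⟩, h3⟩ := hv'
      refine ⟨⟨h1, h2⟩, ?_⟩
      intro h0
      apply h3
      funext i
      fin_cases i
      · simpa using congrArg Prod.fst h0
      · simpa using congrArg (fun t : F × F × F => t.2.1) h0
      · simpa using congrArg (fun t : F × F × F => t.2.2) h0
    · intro t ht
      simp only [Finset.mem_coe, mem_filter, mem_univ, true_and] at ht ⊢
      obtain ⟨⟨h1, h2⟩, h3⟩ := ht
      simp only [Matrix.cons_val_zero, Matrix.cons_val_one, Matrix.head_cons,
        Matrix.cons_val_two, Matrix.tail_cons]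
      refine ⟨⟨h1, h2⟩, ?_⟩
      intro h0
      apply h3
      have e0 := congrFun h0 0
      have e1 := congrFun h0 1
      have e2 := congrFun h0 2
      simp only [Matrix.cons_val_zero, Matrix.cons_val_one, Matrix.head_cons,
        Matrix.cons_val_two, Matrix.tail_cons, Pi.zero_apply] at e0 e1 e2
      exact Prod.ext e0 (Prod.ext e1 e2)
    · intro v _
      funext i
      fin_cases i <;> simp
    · intro t _
      simp
  -- Step B : the count as a `Nat.card`
  have hS : Nat.card {v : Fin 3 → F //
      (a ^ q * v 0 + b ^ q * v 1 + c ^ q * v 2 = 0 ∧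
        v 0 ^ (q+1) + v 1 ^ (q+1) + v 2 ^ (q+1) = 0) ∧ v ≠ 0}
      = (q + 1) * (q ^ 2 - 1) := by
    rw [Nat.card_eq_fintype_card, Fintype.card_subtype]
    exact hvec
  -- Step C : bijection with `Fˣ × T`
  set T := {P : Projectivization F (Fin 3 → F) //
        a ^ q * P.rep 0 + b ^ q * P.rep 1 + c ^ q * P.rep 2 = 0 ∧
        P.rep 0 ^ (q + 1) + P.rep 1 ^ (q + 1) + P.rep 2 ^ (q + 1) = 0} with hT
  have keyL : ∀ (t : F) (v : Fin 3 → F),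
      a ^ q * (t • v) 0 + b ^ q * (t • v) 1 + c ^ q * (t • v) 2
        = t * (a ^ q * v 0 + b ^ q * v 1 + c ^ q * v 2) := by
    intro t v
    simp only [Pi.smul_apply, smul_eq_mul]
    ring
  have keyH : ∀ (t : F) (v : Fin 3 → F),
      ((t • v) 0) ^ (q+1) + ((t • v) 1) ^ (q+1) + ((t • v) 2) ^ (q+1)
        = t ^ (q+1) * (v 0 ^ (q+1) + v 1 ^ (q+1) + v 2 ^ (q+1)) := by
    intro t v
    simp only [Pi.smul_apply, smul_eq_mul, mul_pow]
    ring
  have hΦ : ∀ z : Fˣ × T,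
      ((((z.1 : F) • z.2.val.rep) ≠ 0) ∧
      (a ^ q * ((z.1 : F) • z.2.val.rep) 0 + b ^ q * ((z.1 : F) • z.2.val.rep) 1
          + c ^ q * ((z.1 : F) • z.2.val.rep) 2 = 0 ∧
        (((z.1 : F) • z.2.val.rep) 0) ^ (q+1) + (((z.1 : F) • z.2.val.rep) 1) ^ (q+1)
          + (((z.1 : F) • z.2.val.rep) 2) ^ (q+1) = 0)) := by
    rintro ⟨t, P2⟩
    obtain ⟨hP1, hP2⟩ := P2.2
    show ((t:F) • P2.val.rep ≠ 0) ∧ _ ∧ _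
    refine ⟨smul_ne_zero t.ne_zero P2.val.rep_nonzero, ?_, ?_⟩
    · rw [keyL, hP1, mul_zero]
    · rw [keyH, hP2, mul_zero]
  let Φ : Fˣ × T → {v : Fin 3 → F //
      (a ^ q * v 0 + b ^ q * v 1 + c ^ q * v 2 = 0 ∧
        v 0 ^ (q+1) + v 1 ^ (q+1) + v 2 ^ (q+1) = 0) ∧ v ≠ 0} :=
    fun z => ⟨(z.1 : F) • z.2.val.rep, (hΦ z).2, (hΦ z).1⟩
  have hbij : Function.Bijective Φ := by
    constructor
    · rintro ⟨t, P, hP⟩ ⟨t', P', hP'⟩ heq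
      have hE : (t : F) • P.rep = (t' : F) • P'.rep := congrArg Subtype.val heq
      have hmk : P = P' := by
        have h1 : Projectivization.mk F ((t : F) • P.rep)
            (smul_ne_zero t.ne_zero P.rep_nonzero) = P := by
          conv_rhs => rw [← Projectivization.mk_rep P]
          rw [Projectivization.mk_eq_mk_iff]
          exact ⟨t, rfl⟩
        have h2 : Projectivization.mk F ((t' : F) • P'.rep)
            (smul_ne_zero t'.ne_zero P'.rep_nonzero) = P' := by
          conv_rhs => rw [← Projectivization.mk_rep P']
          rw [Projectivization.mk_eq_mk_iff]
          exact ⟨t', rfl⟩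
        rw [← h1, ← h2]
        congr 1
      obtain ⟨i, hi⟩ : ∃ i, P.rep i ≠ 0 := by
        by_contra h
        push_neg at h
        exact P.rep_nonzero (funext h)
      have ht : t = t' := by
        subst hmk
        have := congrFun hE i
        simp only [Pi.smul_apply, smul_eq_mul] at this
        exact Units.ext (mul_right_cancel₀ hi this)
      subst hmk; subst ht
      rfl
    · rintro ⟨v, hcond, hv0⟩
      set P := Projectivization.mk F v hv0 with hPdef
      obtain ⟨u, hu⟩ : ∃ u : Fˣ, u • P.rep = v := by
        rw [← Projectivization.mk_eq_mk_iff F v P.rep hv0 P.rep_nonzero]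
        exact (Projectivization.mk_rep P).symm
      have hu' : (u : F) • P.rep = v := hu
      have hLrep : a ^ q * P.rep 0 + b ^ q * P.rep 1 + c ^ q * P.rep 2 = 0 := by
        have h1 := hcond.1
        rw [← hu', keyL] at h1
        exact (mul_eq_zero.mp h1).resolve_left u.ne_zero
      have hHrep : P.rep 0 ^ (q+1) + P.rep 1 ^ (q+1) + P.rep 2 ^ (q+1) = 0 := by
        have h1 := hcond.2
        rw [← hu', keyH] at h1
        exact (mul_eq_zero.mp h1).resolve_left (pow_ne_zero _ u.ne_zero)
      exact ⟨⟨u, ⟨P, hLrep, hHrep⟩⟩, Subtype.ext hu'⟩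
  have hcardeq : Nat.card (Fˣ × T) = (q + 1) * (q ^ 2 - 1) := by
    rw [Nat.card_congr (Equiv.ofBijective Φ hbij), hS]
  rw [Nat.card_prod] at hcardeq
  have hu : Nat.card Fˣ = q ^ 2 - 1 := by
    rw [Nat.card_eq_fintype_card, Fintype.card_units, hF]
  rw [hu] at hcardeq
  have hpos : 0 < q ^ 2 - 1 :=
    Nat.sub_pos_of_lt (Nat.one_lt_pow two_ne_zero hq2)
  have : (q ^ 2 - 1) * Nat.card T = (q ^ 2 - 1) * (q + 1) := by
    rw [hcardeq, mul_comm]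
  exact Nat.eq_of_mul_eq_mul_left hpos this
end

section
/- Let p be a prime, n ≥ 1, q = p^n, let F be a finite field with q² elements, and let E be a field extension of F with q⁴ elements. If (x, y, t) ∈ E³ is a nonzero vector with x^{q+1} + y^{q+1} + t^{q+1} = 0, then there exists λ ∈ E with λ ≠ 0 such that λx, λy, λt all lie in F. In other words, the Hermitian curve H_q has no points with coordinates in F_{q⁴} \ F_{q²}: every F_{q⁴}-rational point of H_q already lies in PG(2, F_{q²}). -/
/-- If the cross product of `(x,y,t)` and `(a,b,c)` vanishes and `(x,y,t) ≠ 0`,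
then `(a,b,c)` is a scalar multiple of `(x,y,t)`. -/
lemma herm_prop_of_cross_zero {E : Type} [Field E] (x y t a b c : E)
    (h : ¬(x = 0 ∧ y = 0 ∧ t = 0))
    (h1 : y * c = t * b) (h2 : t * a = x * c) (h3 : x * b = y * a) :
    ∃ μ : E, a = μ * x ∧ b = μ * y ∧ c = μ * t := by
  by_cases hx : x = 0
  · by_cases hy : y = 0
    · have ht : t ≠ 0 := fun h' => h ⟨hx, hy, h'⟩
      refine ⟨c / t, ?_, ?_, ?_⟩
      · have : t * a = 0 := by rw [h2, hx, zero_mul]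
        rcases mul_eq_zero.mp this with h' | h'
        · exact absurd h' ht
        · rw [h', hx]; ring
      · have : t * b = 0 := by rw [← h1, hy, zero_mul]
        rcases mul_eq_zero.mp this with h' | h'
        · exact absurd h' ht
        · rw [h', hy]; ring
      · field_simp
    · refine ⟨b / y, ?_, ?_, ?_⟩
      · have : y * a = 0 := by rw [← h3, hx, zero_mul]
        rcases mul_eq_zero.mp this with h' | h'
        · exact absurd h' hy
        · rw [h', hx]; ring
      · field_simp
      · field_simp
        rw [mul_comm c y, h1]; ring
  · refine ⟨a / x, ?_, ?_, ?_⟩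
    · field_simp
    · field_simp
      rw [mul_comm b x, h3]; ring
    · field_simp
      rw [mul_comm c x, ← h2]; ring

/-- Elements of `E` fixed by `z ↦ z ^ (card F)` lie in the image of `F`. -/
lemma herm_mem_range_of_pow_eq {F E : Type} [Field F] [Fintype F] [Field E] [Fintype E]
    [Algebra F E] {m : ℕ} (hm : Fintype.card F = m) (hm1 : 1 < m) (z : E) (hz : z ^ m = z) :
    z ∈ Set.range (algebraMap F E) := by
  classical
  set f : Polynomial E := Polynomial.X ^ m - Polynomial.X with hf
  have hfne : f ≠ 0 := by
    intro h0
    have : f.coeff m = 0 := by rw [h0]; simp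
    rw [hf] at this
    rw [Polynomial.coeff_sub, Polynomial.coeff_X_pow, Polynomial.coeff_X] at this
    rw [if_neg (by omega : ¬ (1 = m))] at this
    norm_num at this
  have hdeg : f.natDegree ≤ m := by
    refine le_trans (Polynomial.natDegree_sub_le _ _) ?_
    simp [Polynomial.natDegree_X_pow, Polynomial.natDegree_X]
    omega
  have hroot : ∀ w : E, w ^ m = w → w ∈ f.roots.toFinset := by
    intro w hw
    rw [Multiset.mem_toFinset, Polynomial.mem_roots hfne]
    simp [Polynomial.IsRoot, hf, hw]
  set R : Finset E := Finset.image (algebraMap F E) Finset.univ with hR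
  have hcardR : R.card = m := by
    rw [hR, Finset.card_image_of_injective _ (algebraMap F E).injective,
      Finset.card_univ, hm]
  have hsub : R ⊆ f.roots.toFinset := by
    intro r hr
    rw [hR, Finset.mem_image] at hr
    obtain ⟨w, -, rfl⟩ := hr
    apply hroot
    rw [← map_pow, ← hm, FiniteField.pow_card]
  have hcardT : f.roots.toFinset.card ≤ m :=
    le_trans (Multiset.toFinset_card_le _) (le_trans (Polynomial.card_roots' f) hdeg)
  have heq : R = f.roots.toFinset :=
    Finset.eq_of_subset_of_card_le hsub (by omega)
  have : z ∈ R := by rw [heq]; exact hroot z hz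
  rw [hR, Finset.mem_image] at this
  obtain ⟨w, -, rfl⟩ := this
  exact ⟨w, rfl⟩


lemma herm_core {E : Type} [Field E] (φ : E →+* E)
    (x y t x1 y1 t1 x2 y2 t2 x3 y3 t3 : E)
    (hx1 : φ x = x1) (hy1 : φ y = y1) (ht1 : φ t = t1)
    (hx2 : φ x1 = x2) (hy2 : φ y1 = y2) (ht2 : φ t1 = t2)
    (hx3 : φ x2 = x3) (hy3 : φ y2 = y3) (ht3 : φ t2 = t3)
    (hx4 : φ x3 = x) (hy4 : φ y3 = y) (ht4 : φ t3 = t)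
    (hv : ¬(x = 0 ∧ y = 0 ∧ t = 0))
    (d0 : x * x1 + y * y1 + t * t1 = 0) :
    ∃ μ : E, x2 = μ * x ∧ y2 = μ * y ∧ t2 = μ * t := by
  have hinj : Function.Injective φ := φ.injective
  have d1 : x1 * x2 + y1 * y2 + t1 * t2 = 0 := by
    have := congrArg φ d0
    simpa [map_add, map_mul, hx1, hy1, ht1, hx2, hy2, ht2] using this
  have d2 : x2 * x3 + y2 * y3 + t2 * t3 = 0 := by
    have := congrArg φ d1
    simpa [map_add, map_mul, hx2, hy2, ht2, hx3, hy3, ht3] using this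
  have d3 : x3 * x + y3 * y + t3 * t = 0 := by
    have := congrArg φ d2
    simpa [map_add, map_mul, hx3, hy3, ht3, hx4, hy4, ht4] using this
  -- cross product of P and φ²P
  have hcross : y * t2 = t * y2 ∧ t * x2 = x * t2 ∧ x * y2 = y * x2 := by
    by_contra hcne
    set c1 := y * t2 - t * y2 with hc1
    set c2 := t * x2 - x * t2 with hc2
    set c3 := x * y2 - y * x2 with hc3
    have hcne' : ¬(c1 = 0 ∧ c2 = 0 ∧ c3 = 0) := by
      intro ⟨e1, e2, e3⟩
      rw [hc1] at e1; rw [hc2] at e2; rw [hc3] at e3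
      exact hcne ⟨by linear_combination e1, by linear_combination e2,
        by linear_combination e3⟩
    -- φP is orthogonal to both P and φ²P, hence proportional to c
    obtain ⟨α, hα1, hα2, hα3⟩ := herm_prop_of_cross_zero c1 c2 c3 x1 y1 t1 hcne'
      (by rw [hc2, hc3]; linear_combination x2 * d0 - x * d1)
      (by rw [hc3, hc1]; linear_combination y2 * d0 - y * d1)
      (by rw [hc1, hc2]; linear_combination t2 * d0 - t * d1)
    -- φ³P is orthogonal to both P and φ²P, hence proportional to c
    obtain ⟨β, hβ1, hβ2, hβ3⟩ := herm_prop_of_cross_zero c1 c2 c3 x3 y3 t3 hcne'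
      (by rw [hc2, hc3]; linear_combination x2 * d3 - x * d2)
      (by rw [hc3, hc1]; linear_combination y2 * d3 - y * d2)
      (by rw [hc1, hc2]; linear_combination t2 * d3 - t * d2)
    have hα0 : α ≠ 0 := by
      rintro rfl
      apply hv
      simp only [zero_mul] at hα1 hα2 hα3
      refine ⟨?_, ?_, ?_⟩
      · apply hinj; rw [hx1, hα1, map_zero]
      · apply hinj; rw [hy1, hα2, map_zero]
      · apply hinj; rw [ht1, hα3, map_zero]
    -- φ³P = (β/α) φP, apply φ: P = φ(β/α) φ²P, so cross(P, φ²P) = 0, contradiction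
    have e1 : x3 = β * α⁻¹ * x1 := by rw [hβ1, hα1]; field_simp
    have e2 : y3 = β * α⁻¹ * y1 := by rw [hβ2, hα2]; field_simp
    have e3 : t3 = β * α⁻¹ * t1 := by rw [hβ3, hα3]; field_simp
    set δ := φ (β * α⁻¹) with hδ
    have f1 : x = δ * x2 := by rw [← hx4, e1, map_mul, hx2]
    have f2 : y = δ * y2 := by rw [← hy4, e2, map_mul, hy2]
    have f3 : t = δ * t2 := by rw [← ht4, e3, map_mul, ht2]
    exact hcne' ⟨by rw [hc1, f2, f3]; ring, by rw [hc2, f3, f1]; ring,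
      by rw [hc3, f1, f2]; ring⟩
  obtain ⟨h1, h2, h3⟩ := hcross
  exact herm_prop_of_cross_zero x y t x2 y2 t2 hv h1 h2 h3


/-- Let `q = p ^ n`, `F` be a finite field with `q²` elements, and `E` an
extension field of `F` with `q⁴` elements. Every `E`-rational point of the Hermitian curve
`x^(q+1) + y^(q+1) + t^(q+1) = 0` already lies in `PG(2, F)`: if `(x, y, t) ∈ E³` is a nonzero
solution, then some nonzero scalar multiple `(λx, λy, λt)` has all coordinates in (the image
of) `F`. -/
theorem hermitian_curve_no_points_in_Fq4_minus_Fq2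
    (p n q : ℕ) (hp : p.Prime) (hn : 1 ≤ n) (hq : q = p ^ n)
    (F : Type) [Field F] [Fintype F] (hF : Fintype.card F = q ^ 2)
    (E : Type) [Field E] [Fintype E] [Algebra F E] (hE : Fintype.card E = q ^ 4)
    (x y t : E) (hv : ¬(x = 0 ∧ y = 0 ∧ t = 0))
    (heq : x ^ (q + 1) + y ^ (q + 1) + t ^ (q + 1) = 0) :
    ∃ l : E, l ≠ 0 ∧ l * x ∈ Set.range (algebraMap F E) ∧
      l * y ∈ Set.range (algebraMap F E) ∧ l * t ∈ Set.range (algebraMap F E) := by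
  classical
  haveI := Fact.mk hp
  have hq2 : 2 ≤ q := by
    rw [hq]
    calc 2 ≤ p := hp.two_le
    _ ≤ p ^ n := Nat.le_self_pow (by omega) p
  have hq4 : 4 ≤ q * q := Nat.mul_le_mul hq2 hq2
  -- characteristic of F and E is p
  have hcharF : CharP F p := by
    obtain ⟨k, hrk, hck⟩ := FiniteField.card F (ringChar F)
    have hpr : p = ringChar F := by
      have hdvd : p ∣ ringChar F ^ (k : ℕ) := by
        rw [← hck, hF, hq]
        exact dvd_pow (dvd_pow_self p (by omega)) (by omega)
      exact (Nat.prime_dvd_prime_iff_eq hp hrk).mp (hp.dvd_of_dvd_pow hdvd)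
    rw [hpr]; exact ringChar.charP F
  haveI := hcharF
  haveI : CharP E p := charP_of_injective_algebraMap (algebraMap F E).injective p
  -- the q-power Frobenius
  set ψ : E →+* E := iterateFrobenius E p n with hψdef
  have hψ : ∀ z : E, ψ z = z ^ q := fun z => by
    rw [hψdef, iterateFrobenius_def, hq]
  have hz4 : ∀ z : E, z ^ (q * q * q * q) = z := fun z => by
    rw [show q * q * q * q = q ^ 4 by ring, ← hE, FiniteField.pow_card]
  -- apply the core lemma
  obtain ⟨μ, hμx, hμy, hμt⟩ := herm_core ψ x y t (x ^ q) (y ^ q) (t ^ q)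
    (x ^ (q * q)) (y ^ (q * q)) (t ^ (q * q))
    (x ^ (q * q * q)) (y ^ (q * q * q)) (t ^ (q * q * q))
    (hψ x) (hψ y) (hψ t)
    (by rw [hψ, ← pow_mul]) (by rw [hψ, ← pow_mul]) (by rw [hψ, ← pow_mul])
    (by rw [hψ, ← pow_mul]) (by rw [hψ, ← pow_mul]) (by rw [hψ, ← pow_mul])
    (by rw [hψ, ← pow_mul]; exact hz4 x) (by rw [hψ, ← pow_mul]; exact hz4 y)
    (by rw [hψ, ← pow_mul]; exact hz4 t)
    hv
    (by rw [pow_succ', pow_succ', pow_succ'] at heq; exact heq)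
  -- μ is nonzero
  have hμ0 : μ ≠ 0 := by
    rintro rfl
    simp only [zero_mul] at hμx hμy hμt
    exact hv ⟨pow_eq_zero_iff (by omega) |>.mp hμx, pow_eq_zero_iff (by omega) |>.mp hμy,
      pow_eq_zero_iff (by omega) |>.mp hμt⟩
  -- μ ^ (q² + 1) = 1
  have step : ∀ z : E, z ^ (q * q) = μ * z → z ≠ 0 → μ ^ (q * q) * μ = 1 := by
    intro z h hz0
    have h2 : z = μ ^ (q * q) * μ * z := by
      calc z = (z ^ (q * q)) ^ (q * q) := by
              rw [← pow_mul, show q * q * (q * q) = q * q * q * q by ring, hz4]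
      _ = μ ^ (q * q) * (μ * z) := by rw [h, mul_pow, h]
      _ = μ ^ (q * q) * μ * z := by ring
    have h3 : μ ^ (q * q) * μ * z = 1 * z := by rw [one_mul, ← h2]
    exact mul_right_cancel₀ hz0 h3
  have hμ1 : μ ^ (q * q) * μ = 1 := by
    by_cases hx0 : x = 0
    · by_cases hy0 : y = 0
      · exact step t hμt (fun h => hv ⟨hx0, hy0, h⟩)
      · exact step y hμy hy0
    · exact step x hμx hx0
  -- find l with l ^ (q²) * μ = l, via cyclicity of Eˣ
  obtain ⟨m, hm⟩ : ∃ m, q * q = m + 1 := ⟨q * q - 1, by omega⟩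
  have hcardu : Fintype.card Eˣ = m * (m + 2) := by
    rw [Fintype.card_units, hE]
    have h1 : q ^ 4 = m * m + 2 * m + 1 := by
      rw [show q ^ 4 = q * q * (q * q) by ring, hm]; ring
    have h2 : m * (m + 2) = m * m + 2 * m := by ring
    omega
  obtain ⟨g, hg⟩ := IsCyclic.exists_generator (α := Eˣ)
  have horder : orderOf g = m * (m + 2) := by
    rw [orderOf_eq_card_of_forall_mem_zpowers hg, Nat.card_eq_fintype_card, hcardu]
  set U : Eˣ := Units.mk0 μ hμ0 with hU
  obtain ⟨k, hk⟩ : ∃ k : ℤ, g ^ k = U := by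
    have := hg U
    rwa [Subgroup.mem_zpowers_iff] at this
  have hU1 : U ^ (m + 2) = 1 := by
    ext
    push_cast [Units.val_pow_eq_pow_val]
    rw [hU, Units.val_mk0, show m + 2 = q * q + 1 by omega, pow_succ]
    exact hμ1
  have hgk : g ^ (k * ((m : ℤ) + 2)) = 1 := by
    rw [zpow_mul, hk, show ((m : ℤ) + 2) = ((m + 2 : ℕ) : ℤ) by push_cast; ring,
      zpow_natCast, hU1]
  have hdvd : ((m : ℤ) * ((m : ℤ) + 2)) ∣ k * ((m : ℤ) + 2) := by
    have := orderOf_dvd_iff_zpow_eq_one.mpr hgk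
    rw [horder] at this
    exact_mod_cast this
  have hmdvd : (m : ℤ) ∣ k :=
    (mul_dvd_mul_iff_right (by positivity : ((m : ℤ) + 2) ≠ 0)).mp hdvd
  obtain ⟨j, hj⟩ := hmdvd
  set L : Eˣ := g ^ (-j) with hL
  have hLkey : L ^ ((m : ℤ) + 1) * U = L := by
    rw [hL, ← hk, hj, ← zpow_mul, ← zpow_add]
    congr 1
    ring
  have hlkey : (L : E) ^ (q * q) * μ = (L : E) := by
    have h1 := congrArg (Units.val (α := E)) hLkey
    rw [Units.val_mul, Units.val_zpow_eq_zpow_val, hU, Units.val_mk0,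
      show ((m : ℤ) + 1) = ((m + 1 : ℕ) : ℤ) by push_cast; ring, zpow_natCast, ← hm] at h1
    exact h1
  have hcard1 : 1 < q ^ 2 := by
    rw [pow_two]; omega
  refine ⟨(L : E), Units.ne_zero L, ?_, ?_, ?_⟩
  · refine herm_mem_range_of_pow_eq hF hcard1 _ ?_
    rw [show (q ^ 2 : ℕ) = q * q by ring, mul_pow, hμx]
    linear_combination x * hlkey
  · refine herm_mem_range_of_pow_eq hF hcard1 _ ?_
    rw [show (q ^ 2 : ℕ) = q * q by ring, mul_pow, hμy]
    linear_combination y * hlkey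
  · refine herm_mem_range_of_pow_eq hF hcard1 _ ?_
    rw [show (q ^ 2 : ℕ) = q * q by ring, mul_pow, hμt]
    linear_combination t * hlkey
end

section
/- Let q = 2^n with n ≥ 1, and let F be a finite field with q² elements. In the group S = { τ_{1,b,c} : b, c ∈ F, b^{q+1} = c^q + c } of order q³, an element τ_{1,b,c} has order 2 if and only if b = 0 and c ≠ 0, and every element with b ≠ 0 has order 4. In particular S has exponent 4 and contains exactly q − 1 involutions. -/
/-- The matrix `τ_{1,b,c}` with rows `(1, b^q, c)`, `(0, 1, b)`, `(0, 0, 1)`. -/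
def tau {F : Type} [Field F] (q : ℕ) (b c : F) : Matrix (Fin 3) (Fin 3) F :=
  !![1, b ^ q, c; 0, 1, b; 0, 0, 1]

open Polynomial Finset in
/-- Let `q = 2 ^ n`, `n ≥ 1`, and `F` be a finite field with `q²` elements.
In the group `S = { τ_{1,b,c} : b, c ∈ F, b^(q+1) = c^q + c }` of order `q³`, an element
`τ_{1,b,c}` has order `2` iff `b = 0` and `c ≠ 0`, every element with `b ≠ 0` has order `4`;
in particular `S` has exponent `4` (every element satisfies `τ⁴ = 1`) and contains exactly
`q - 1` involutions. -/
theorem tau_orders_char_two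
    (n q : ℕ) (hn : 1 ≤ n) (hq : q = 2 ^ n)
    (F : Type) [Field F] [Fintype F] (hF : Fintype.card F = q ^ 2) :
    (∀ b c : F, b ^ (q + 1) = c ^ q + c →
      ((orderOf (tau q b c) = 2 ↔ (b = 0 ∧ c ≠ 0)) ∧
        (b ≠ 0 → orderOf (tau q b c) = 4) ∧
        (tau q b c) ^ 4 = 1)) ∧
    Nat.card {A : Matrix (Fin 3) (Fin 3) F //
        (∃ b c : F, b ^ (q + 1) = c ^ q + c ∧ A = tau q b c) ∧ orderOf A = 2} = q - 1 := by
  classical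
  haveI : Fact (Nat.Prime 2) := ⟨Nat.prime_two⟩
  have hq1 : 1 < q := by
    rw [hq]; exact Nat.one_lt_pow (by omega) one_lt_two
  have hq0 : q ≠ 0 := by omega
  -- characteristic 2
  haveI hchar : CharP F 2 := by
    haveI := ringChar.charP F
    obtain ⟨k, hkp, hcard⟩ := FiniteField.card F (ringChar F)
    have h2 : ringChar F ∣ 2 ^ (2 * n) := by
      have : ringChar F ∣ ringChar F ^ (k : ℕ) := dvd_pow_self _ k.ne_zero
      rwa [← hcard, hF, hq, ← pow_mul, mul_comm] at this
    have : ringChar F = 2 :=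
      (Nat.prime_dvd_prime_iff_eq hkp Nat.prime_two).mp (hkp.dvd_of_dvd_pow h2)
    exact this ▸ ringChar.charP F
  -- basic matrix facts
  have tau_sq : ∀ b c : F, tau q b c ^ 2 = tau q 0 (b ^ (q + 1)) := by
    intro b c
    ext i j
    fin_cases i <;> fin_cases j
    all_goals simp [tau, pow_two, Matrix.mul_apply, Fin.sum_univ_three, zero_pow hq0,
      Matrix.vecHead, Matrix.vecTail]
    all_goals (ring_nf; try simp [CharTwo.two_eq_zero, pow_succ, mul_comm])
  have tau_zero : tau q 0 0 = (1 : Matrix (Fin 3) (Fin 3) F) := by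
    rw [Matrix.one_fin_three]
    simp [tau, zero_pow hq0]
  have tau_entry : ∀ b c : F, tau q b c 0 2 = c := by
    intro b c; simp [tau]
  have tau_entry12 : ∀ b c : F, tau q b c 1 2 = b := by
    intro b c; simp [tau]
  have tau_eq_one : ∀ b c : F, tau q b c = 1 ↔ b = 0 ∧ c = 0 := by
    intro b c
    constructor
    · intro h
      have hb := congrFun (congrFun h 1) 2
      have hc := congrFun (congrFun h 0) 2
      rw [Matrix.one_fin_three] at hb hc
      simp [tau] at hb hc
      exact ⟨hb, hc⟩
    · rintro ⟨rfl, rfl⟩; exact tau_zero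
  have tau4 : ∀ b c : F, tau q b c ^ 4 = 1 := by
    intro b c
    have : tau q b c ^ 4 = (tau q b c ^ 2) ^ 2 := by rw [← pow_mul]
    rw [this, tau_sq, tau_sq, zero_pow (by omega : q + 1 ≠ 0), tau_zero]
  -- first part
  have part1 : ∀ b c : F, b ^ (q + 1) = c ^ q + c →
      ((orderOf (tau q b c) = 2 ↔ (b = 0 ∧ c ≠ 0)) ∧
        (b ≠ 0 → orderOf (tau q b c) = 4) ∧
        (tau q b c) ^ 4 = 1) := by
    intro b c _hbc
    have hsq_one : tau q b c ^ 2 = 1 ↔ b = 0 := by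
      rw [tau_sq, tau_eq_one]
      simp [pow_eq_zero_iff (n := q + 1) (by omega)]
    refine ⟨⟨?_, ?_⟩, ?_, tau4 b c⟩
    · intro h
      have h2 : tau q b c ^ 2 = 1 := by
        rw [← h]; exact pow_orderOf_eq_one _
      have hb : b = 0 := hsq_one.mp h2
      refine ⟨hb, fun hc => ?_⟩
      have : tau q b c = 1 := (tau_eq_one b c).mpr ⟨hb, hc⟩
      rw [this, orderOf_one] at h
      exact absurd h (by norm_num)
    · rintro ⟨hb, hc⟩
      exact orderOf_eq_prime (hsq_one.mpr hb) (fun h => hc ((tau_eq_one b c).mp h).2)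
    · intro hb
      have hdvd : orderOf (tau q b c) ∣ 4 := orderOf_dvd_of_pow_eq_one (tau4 b c)
      have hne1 : orderOf (tau q b c) ≠ 1 := by
        intro h
        rcases (tau_eq_one b c).mp (orderOf_eq_one_iff.mp h) with ⟨rfl, -⟩
        exact hb rfl
      have hne2 : orderOf (tau q b c) ≠ 2 := by
        intro h
        have h2 : tau q b c ^ 2 = 1 := by rw [← h]; exact pow_orderOf_eq_one _
        exact hb (hsq_one.mp h2)
      set d := orderOf (tau q b c) with hd
      clear_value d
      have hle : d ≤ 4 := Nat.le_of_dvd (by norm_num) hdvd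
      have hpos : 0 < d := Nat.pos_of_dvd_of_pos hdvd (by norm_num)
      interval_cases d <;> omega
  refine ⟨part1, ?_⟩
  -- counting involutions
  -- the set of roots of X^q - X has exactly q elements
  have hPne : (X ^ q ^ 2 - X : F[X]) ≠ 0 :=
    FiniteField.X_pow_card_sub_X_ne_zero F (by nlinarith)
  have hpne : (X ^ q - X : F[X]) ≠ 0 := FiniteField.X_pow_card_sub_X_ne_zero F hq1
  have hProots : (X ^ q ^ 2 - X : F[X]).roots = Finset.univ.val := by
    rw [← hF]; exact FiniteField.roots_X_pow_card_sub_X F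
  have hdvd : (X ^ q - X : F[X]) ∣ (X ^ q ^ 2 - X) := by
    refine Dvd.intro ((X ^ q - X) ^ (q - 1) + 1) ?_
    have hpq : (X ^ q - X : F[X]) ^ q = X ^ q ^ 2 - X ^ q := by
      conv_lhs => rw [hq]
      rw [sub_pow_char_pow, ← hq, ← pow_mul, ← pow_two]
    have : (X ^ q - X : F[X]) * ((X ^ q - X) ^ (q - 1) + 1) = (X ^ q - X) ^ q + (X ^ q - X) := by
      rw [mul_add, mul_one, ← pow_succ']
      congr 2
      omega
    rw [this, hpq]
    ring
  have hroots_le : (X ^ q - X : F[X]).roots ≤ (X ^ q ^ 2 - X : F[X]).roots :=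
    Polynomial.roots.le_of_dvd hPne hdvd
  have hnodup : (X ^ q - X : F[X]).roots.Nodup := by
    refine Multiset.nodup_of_le hroots_le ?_
    rw [hProots]; exact Finset.univ.nodup
  have hsplitsP : Splits (X ^ q ^ 2 - X : F[X]) := by
    rw [splits_iff_card_roots, hProots,
      FiniteField.X_pow_card_sub_X_natDegree_eq F (by nlinarith)]
    simpa using hF
  have hsplitsp : Splits (X ^ q - X : F[X]) :=
    hsplitsP.of_dvd hPne hdvd
  have hcard_roots : (X ^ q - X : F[X]).roots.card = q := by
    rw [splits_iff_card_roots.mp hsplitsp,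
      FiniteField.X_pow_card_sub_X_natDegree_eq F hq1]
  -- the finset of c with c^q + c = 0
  have hmem : ∀ c : F, c ∈ (X ^ q - X : F[X]).roots ↔ c ^ q + c = 0 := by
    intro c
    rw [mem_roots hpne, IsRoot.def, eval_sub, eval_pow, eval_X, CharTwo.sub_eq_add]
  have hT : (Finset.univ.filter (fun c : F => c ^ q + c = 0)) =
      (X ^ q - X : F[X]).roots.toFinset := by
    ext c
    simp [hmem c]
  have hTcard : (Finset.univ.filter (fun c : F => c ^ q + c = 0)).card = q := by
    rw [hT, Multiset.toFinset_card_of_nodup hnodup, hcard_roots]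
  -- rewrite the subtype
  have hiff : ∀ A : Matrix (Fin 3) (Fin 3) F,
      ((∃ b c : F, b ^ (q + 1) = c ^ q + c ∧ A = tau q b c) ∧ orderOf A = 2) ↔
        (∃ c : F, (c ^ q + c = 0 ∧ c ≠ 0) ∧ A = tau q 0 c) := by
    intro A
    constructor
    · rintro ⟨⟨b, c, hbc, rfl⟩, hord⟩
      obtain ⟨hb, hc⟩ := ((part1 b c hbc).1).mp hord
      subst hb
      refine ⟨c, ⟨?_, hc⟩, rfl⟩
      rw [← hbc, zero_pow (by omega)]
    · rintro ⟨c, ⟨hc0, hc⟩, rfl⟩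
      have hbc : (0 : F) ^ (q + 1) = c ^ q + c := by
        rw [zero_pow (by omega : q + 1 ≠ 0), hc0]
      exact ⟨⟨0, c, hbc, rfl⟩, ((part1 0 c hbc).1).mpr ⟨rfl, hc⟩⟩
  have e : {c : F // c ^ q + c = 0 ∧ c ≠ 0} ≃
      {A : Matrix (Fin 3) (Fin 3) F //
        (∃ b c : F, b ^ (q + 1) = c ^ q + c ∧ A = tau q b c) ∧ orderOf A = 2} :=
  { toFun := fun c => ⟨tau q 0 c.1, (hiff _).mpr ⟨c.1, c.2, rfl⟩⟩
    invFun := fun A => ⟨A.1 0 2, by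
      obtain ⟨c, hc, hA⟩ := (hiff A.1).mp A.2
      rw [hA, tau_entry]; exact hc⟩
    left_inv := fun c => Subtype.ext (tau_entry 0 c.1)
    right_inv := fun A => Subtype.ext (by
      obtain ⟨c, hc, hA⟩ := (hiff A.1).mp A.2
      show tau q 0 (A.1 0 2) = A.1
      rw [hA, tau_entry]) }
  rw [Nat.card_congr e.symm, Nat.card_eq_fintype_card, Fintype.card_subtype]
  have : (Finset.univ.filter (fun c : F => c ^ q + c = 0 ∧ c ≠ 0)) =
      (Finset.univ.filter (fun c : F => c ^ q + c = 0)).erase 0 := by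
    ext c
    simp [Finset.mem_erase, and_comm]
  rw [this, Finset.card_erase_of_mem, hTcard]
  simp [zero_pow hq0]
end

section
/- Let p be a prime, n ≥ 1, q = p^n, and let F be a finite field with q² elements. The map sending τ_{1,b,c} to b is a surjective group homomorphism from the group S = { τ_{1,b,c} : b, c ∈ F, b^{q+1} = c^q + c } (under matrix multiplication) onto the additive group of F, and its kernel is { τ_{1,0,c} : c ∈ F, c^q + c = 0 }, a subgroup of order q. -/
/-- Bound the size of a set of roots of a nonzero polynomial. -/
lemma ncard_le_natDegree_of_roots {F : Type} [Field F] (P : Polynomial F) (hP : P ≠ 0)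
    (s : Set F) (hs : ∀ x ∈ s, P.IsRoot x) : s.ncard ≤ P.natDegree := by
  classical
  have h1 : s ⊆ ↑P.roots.toFinset := fun x hx =>
    Finset.mem_coe.mpr (Multiset.mem_toFinset.mpr (Polynomial.mem_roots'.mpr ⟨hP, hs x hx⟩))
  calc s.ncard ≤ (P.roots.toFinset : Set F).ncard :=
        Set.ncard_le_ncard h1 (Set.toFinite _)
    _ = P.roots.toFinset.card := by simp [Set.ncard_coe_finset]
    _ ≤ Multiset.card P.roots := Multiset.toFinset_card_le _
    _ ≤ P.natDegree := P.card_roots'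

/-- Let `q = p ^ n` and `F` be a finite field with `q²` elements. On the group
`S = { τ_{1,b,c} : b, c ∈ F, b^(q+1) = c^q + c }` the map `τ_{1,b,c} ↦ b` (reading off the
`(1,2)` entry) is a surjective group homomorphism onto the additive group of `F`, whose kernel
is `{ τ_{1,0,c} : c ∈ F, c^q + c = 0 }`, a subgroup of order `q`. -/
theorem tau_entry_map_is_surjective_hom_with_kernel_of_order_q
    (p n q : ℕ) (hp : p.Prime) (hn : 1 ≤ n) (hq : q = p ^ n)
    (F : Type) [Field F] [Fintype F] (hF : Fintype.card F = q ^ 2) :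
    (∀ A ∈ {A : Matrix (Fin 3) (Fin 3) F | ∃ b c : F, b ^ (q + 1) = c ^ q + c ∧ A = tau q b c},
     ∀ B ∈ {A : Matrix (Fin 3) (Fin 3) F | ∃ b c : F, b ^ (q + 1) = c ^ q + c ∧ A = tau q b c},
      (A * B) ∈
        {A : Matrix (Fin 3) (Fin 3) F | ∃ b c : F, b ^ (q + 1) = c ^ q + c ∧ A = tau q b c} ∧
      (A * B) 1 2 = A 1 2 + B 1 2) ∧
    (∀ b : F, ∃ A ∈
        {A : Matrix (Fin 3) (Fin 3) F | ∃ b c : F, b ^ (q + 1) = c ^ q + c ∧ A = tau q b c},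
      A 1 2 = b) ∧
    ({A : Matrix (Fin 3) (Fin 3) F |
        (∃ b c : F, b ^ (q + 1) = c ^ q + c ∧ A = tau q b c) ∧ A 1 2 = 0} =
      {A : Matrix (Fin 3) (Fin 3) F | ∃ c : F, c ^ q + c = 0 ∧ A = tau q 0 c}) ∧
    Nat.card {A : Matrix (Fin 3) (Fin 3) F //
        (∃ b c : F, b ^ (q + 1) = c ^ q + c ∧ A = tau q b c) ∧ A 1 2 = 0} = q := by
  classical
  haveI : Fact p.Prime := ⟨hp⟩
  have hq2 : 2 ≤ q := by
    subst hq
    calc 2 ≤ p := hp.two_le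
    _ = p ^ 1 := (pow_one p).symm
    _ ≤ p ^ n := Nat.pow_le_pow_right hp.pos hn
  -- characteristic p
  haveI hcharp : CharP F p := by
    obtain ⟨m, hpr, hcard⟩ := FiniteField.card F (ringChar F)
    have hdvd : ringChar F ∣ p ^ (n * 2) := by
      have : ringChar F ^ (m : ℕ) = p ^ (n * 2) := by
        rw [← hcard, hF, hq, ← pow_mul]
      exact this ▸ dvd_pow_self (ringChar F) m.ne_zero
    have : ringChar F = p :=
      (Nat.prime_dvd_prime_iff_eq hpr hp).mp (Nat.Prime.dvd_of_dvd_pow hpr hdvd)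
    rw [← this]; infer_instance
  have hfrob : ∀ x y : F, (x + y) ^ q = x ^ q + y ^ q := by
    subst hq; intro x y; exact add_pow_char_pow (R := F) (p := p) x y n
  have hpow : ∀ x : F, (x ^ q) ^ q = x := by
    intro x
    rw [← pow_mul, ← sq, ← hF, FiniteField.pow_card]
  have hentry12 : ∀ b c : F, tau q b c 1 2 = b := fun b c => by simp [tau]
  have hentry02 : ∀ b c : F, tau q b c 0 2 = c := fun b c => by simp [tau]
  have hmul : ∀ b c b' c' : F,
      tau q b c * tau q b' c' = tau q (b + b') (c + c' + b ^ q * b') := by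
    intro b c b' c'
    ext i j
    fin_cases i <;> fin_cases j <;>
      simp [tau, Matrix.mul_apply, Fin.sum_univ_succ, Matrix.vecHead, Matrix.vecTail, hfrob] <;> ring
  have hclosed : ∀ b c b' c' : F, b ^ (q + 1) = c ^ q + c → b' ^ (q + 1) = c' ^ q + c' →
      (b + b') ^ (q + 1) = (c + c' + b ^ q * b') ^ q + (c + c' + b ^ q * b') := by
    intro b c b' c' h h'
    have e1 : (c + c' + b ^ q * b') ^ q = c ^ q + c' ^ q + b * b' ^ q := by
      rw [hfrob, hfrob, mul_pow, hpow]
    rw [pow_succ] at h h'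
    rw [pow_succ, hfrob, e1]
    linear_combination h + h'
  -- the additive map c ↦ c^q + c
  have hq0 : q ≠ 0 := by omega
  let φ : F →+ F :=
    { toFun := fun c => c ^ q + c
      map_zero' := by simp [zero_pow hq0]
      map_add' := fun x y => by
        show (x + y) ^ q + (x + y) = (x ^ q + x) + (y ^ q + y)
        rw [hfrob]; ring }
  -- the two root sets
  have hkerP : ((Polynomial.X ^ q + Polynomial.X : Polynomial F)) ≠ 0 := by
    intro h
    have := congrArg (Polynomial.coeff · 1) h
    simp [Polynomial.coeff_X_pow, if_neg (show ¬ (1:ℕ) = q by omega)] at this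
  have hkerdeg : (Polynomial.X ^ q + Polynomial.X : Polynomial F).natDegree = q := by
    compute_degree!
    · rw [if_neg (by omega)]; simp
    · omega
  have hEP : ((Polynomial.X ^ q - Polynomial.X : Polynomial F)) ≠ 0 := by
    intro h
    have := congrArg (Polynomial.coeff · 1) h
    simp [Polynomial.coeff_X_pow, if_neg (show ¬ (1:ℕ) = q by omega)] at this
  have hEdeg : (Polynomial.X ^ q - Polynomial.X : Polynomial F).natDegree = q := by
    compute_degree!
    · rw [if_neg (by omega)]; simp
    · omega
  have hkerle : ({c : F | c ^ q + c = 0}).ncard ≤ q := by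
    have := ncard_le_natDegree_of_roots (Polynomial.X ^ q + Polynomial.X) hkerP
      {c : F | c ^ q + c = 0} (fun x hx => by simpa [Polynomial.IsRoot] using hx)
    rwa [hkerdeg] at this
  have hEle : ({y : F | y ^ q = y}).ncard ≤ q := by
    have := ncard_le_natDegree_of_roots (Polynomial.X ^ q - Polynomial.X) hEP
      {y : F | y ^ q = y} (fun x hx => by
        simp only [Polynomial.IsRoot, Polynomial.eval_sub, Polynomial.eval_pow,
          Polynomial.eval_X, sub_eq_zero]
        exact hx)
    rwa [hEdeg] at this
  -- range contained in E
  have hrange_sub : (φ.range : Set F) ⊆ {y : F | y ^ q = y} := by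
    rintro y ⟨c, rfl⟩
    show (c ^ q + c) ^ q = c ^ q + c
    rw [hfrob, hpow]; ring
  -- cardinality computation
  have hcard_prod : Nat.card φ.range * Nat.card φ.ker = q ^ 2 := by
    rw [← Nat.card_congr (QuotientAddGroup.quotientKerEquivRange φ).toEquiv,
      ← AddSubgroup.card_eq_card_quotient_mul_card_addSubgroup φ.ker,
      Nat.card_eq_fintype_card, hF]
  have hker_eq_set : (φ.ker : Set F) = {c : F | c ^ q + c = 0} := by
    ext c; simp [AddMonoidHom.mem_ker, φ]
  have hkercard_le : Nat.card φ.ker ≤ q := by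
    rw [← SetLike.coe_sort_coe, Nat.card_coe_set_eq, hker_eq_set]
    exact hkerle
  have hrangecard_le : Nat.card φ.range ≤ q := by
    rw [← SetLike.coe_sort_coe, Nat.card_coe_set_eq]
    calc (φ.range : Set F).ncard ≤ ({y : F | y ^ q = y}).ncard :=
          Set.ncard_le_ncard hrange_sub (Set.toFinite _)
      _ ≤ q := hEle
  have hkercard : Nat.card φ.ker = q := by nlinarith
  have hrangecard : Nat.card φ.range = q := by nlinarith
  -- range = E
  have hrange_eq : (φ.range : Set F) = {y : F | y ^ q = y} := by
    apply Set.eq_of_subset_of_ncard_le hrange_sub _ (Set.toFinite _)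
    calc ({y : F | y ^ q = y}).ncard ≤ q := hEle
      _ = (φ.range : Set F).ncard := by
          rw [← hrangecard, ← SetLike.coe_sort_coe, Nat.card_coe_set_eq]
  refine ⟨?_, ?_, ?_, ?_⟩
  · rintro A ⟨b, c, hbc, rfl⟩ B ⟨b', c', hbc', rfl⟩
    refine ⟨⟨b + b', c + c' + b ^ q * b', hclosed b c b' c' hbc hbc', hmul b c b' c'⟩, ?_⟩
    rw [hmul b c b' c', hentry12, hentry12, hentry12]
  · intro b
    have hb : b ^ (q + 1) ∈ (φ.range : Set F) := by
      rw [hrange_eq]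
      show (b ^ (q + 1)) ^ q = b ^ (q + 1)
      rw [pow_succ, mul_pow, hpow, mul_comm]
    obtain ⟨c, hc⟩ := hb
    exact ⟨tau q b c, ⟨b, c, hc.symm, rfl⟩, hentry12 b c⟩
  · ext A
    constructor
    · rintro ⟨⟨b, c, hbc, rfl⟩, h12⟩
      rw [hentry12] at h12
      subst h12
      rw [zero_pow (by omega)] at hbc
      exact ⟨c, hbc.symm, rfl⟩
    · rintro ⟨c, hc, rfl⟩
      exact ⟨⟨0, c, by rw [zero_pow (by omega)]; exact hc.symm, rfl⟩, hentry12 0 c⟩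
  · -- cardinality of the kernel
    have e : {c : F // c ^ q + c = 0} ≃ {A : Matrix (Fin 3) (Fin 3) F //
        (∃ b c : F, b ^ (q + 1) = c ^ q + c ∧ A = tau q b c) ∧ A 1 2 = 0} := by
      refine Equiv.ofBijective (fun c => ⟨tau q 0 c.1,
        ⟨0, c.1, by rw [zero_pow (by omega)]; exact c.2.symm, rfl⟩, hentry12 0 c.1⟩) ⟨?_, ?_⟩
      · rintro ⟨c, hc⟩ ⟨c', hc'⟩ h
        have := congrArg (fun A => A.1 0 2) h
        simp only [hentry02] at this
        exact Subtype.ext this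
      · rintro ⟨A, ⟨b, c, hbc, rfl⟩, h12⟩
        rw [hentry12] at h12
        subst h12
        rw [zero_pow (by omega)] at hbc
        exact ⟨⟨c, hbc.symm⟩, rfl⟩
    rw [← Nat.card_congr e]
    have : Nat.card {c : F // c ^ q + c = 0} = Nat.card φ.ker :=
      Nat.card_congr (Equiv.subtypeEquivRight fun c => by
        simp [AddMonoidHom.mem_ker, φ]).symm
    rw [this, hkercard]
end

section
/- Let p be a prime, n ≥ 1, q = p^n, let F be a finite field with q² elements, and let E be any field extension of F. For every nontrivial element τ = τ_{1,b,c} of the group S, the only point of PG(2,E) that is fixed by τ (i.e. whose representative vectors v ∈ E³ satisfy τ·v = λv for some scalar λ) and whose coordinates (x, y, t) satisfy y^{q+1} = x^q t + x t^q, is the point [1 : 0 : 0]. In other words, every nontrivial element of S fixes exactly one point of the Hermitian curve in its norm-trace model. -/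
/-- Let `q = p ^ n`, `F` be a finite field with `q²` elements, and `E` any
field extension of `F`. Every nontrivial element `τ = τ_{1,b,c}` of `S` fixes exactly one point
of `PG(2, E)` lying on the norm-trace model `y^(q+1) = x^q t + x t^q` of the Hermitian curve,
namely the point `[1 : 0 : 0]`: a nonzero vector `v ∈ E³` satisfying the curve equation is an
eigenvector of `τ` if and only if `v 1 = 0` and `v 2 = 0`, i.e. `v` is a scalar multiple of
`(1, 0, 0)`. -/
theorem tau_fixes_exactly_one_point_of_curve
    (p n q : ℕ) (hp : p.Prime) (hn : 1 ≤ n) (hq : q = p ^ n)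
    (F : Type) [Field F] [Fintype F] (hF : Fintype.card F = q ^ 2)
    (E : Type) [Field E] [Algebra F E]
    (b c : F) (hbc : b ^ (q + 1) = c ^ q + c) (hnt : ¬(b = 0 ∧ c = 0)) :
    ∀ v : Fin 3 → E, v ≠ 0 →
      (((∃ l : E, ((tau q b c).map (algebraMap F E)).mulVec v = l • v) ∧
          v 1 ^ (q + 1) = v 0 ^ q * v 2 + v 0 * v 2 ^ q) ↔
        (v 1 = 0 ∧ v 2 = 0)) := by
  intro v hv
  have hq0 : q ≠ 0 := hq ▸ pow_ne_zero n hp.pos.ne'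
  have hinj : Function.Injective (algebraMap F E) := (algebraMap F E).injective
  constructor
  · rintro ⟨⟨l, hl⟩, hcurve⟩
    have h0 := congrFun hl 0
    have h1 := congrFun hl 1
    have h2 := congrFun hl 2
    simp [tau, Matrix.mulVec, dotProduct, Fin.sum_univ_three, map_pow] at h0 h1 h2
    have hv2 : v 2 = 0 := by
      by_contra hv2
      have hl1 : l = 1 := by
        have hz : (l - 1) * v 2 = 0 := by linear_combination -h2
        rcases mul_eq_zero.mp hz with h | h
        · exact sub_eq_zero.mp h
        · exact (hv2 h).elim
      subst hl1
      -- h1 : v 1 + b • v 2 = v 1  gives b = 0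
      have hb : b = 0 := by
        rw [one_mul] at h1
        have hB : algebraMap F E b * v 2 = 0 := by linear_combination h1
        rcases mul_eq_zero.mp hB with h | h
        · exact hinj (by simpa using h)
        · exact (hv2 h).elim
      have hc : c = 0 := by
        have hC : algebraMap F E c * v 2 = 0 := by
          have : algebraMap F E b ^ q * v 1 + algebraMap F E c * v 2 = 0 := by
            rw [one_mul] at h0; linear_combination h0
          rw [hb] at this
          simpa [zero_pow hq0] using this
        rcases mul_eq_zero.mp hC with h | h
        · exact hinj (by simpa using h)
        · exact (hv2 h).elim
      exact hnt ⟨hb, hc⟩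
    refine ⟨?_, hv2⟩
    have : v 1 ^ (q + 1) = 0 := by rw [hcurve, hv2]; simp [zero_pow hq0]
    exact pow_eq_zero_iff (by omega : q + 1 ≠ 0) |>.mp this
  · rintro ⟨h1, h2⟩
    refine ⟨⟨1, ?_⟩, by simp [h1, h2, zero_pow hq0, zero_pow (by omega : q + 1 ≠ 0)]⟩
    funext i
    fin_cases i <;>
      simp [tau, Matrix.mulVec, dotProduct, Fin.sum_univ_three, h1, h2]
end

section
/- Let p be a prime, n ≥ 1, q = p^n, and let F be a finite field with q² elements. Let P₁ ≠ P₂ and Q₁ ≠ Q₂ be points of PG(2,F) whose homogeneous coordinates satisfy x^{q+1} + y^{q+1} + t^{q+1} = 0. Then there exists a matrix A ∈ GL(3,F) that maps the set of nonzero solutions of x^{q+1} + y^{q+1} + t^{q+1} = 0 in F³ onto itself and whose induced projective map sends P₁ to Q₁ and P₂ to Q₂. In other words, the group of projectivities preserving H_q(F) acts 2-transitively on H_q(F). -/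
open Matrix

namespace HermAux

variable {F : Type} [Field F]

/-- The Hermitian form. -/
def herm (q : ℕ) (v w : Fin 3 → F) : F :=
  v 0 * w 0 ^ q + v 1 * w 1 ^ q + v 2 * w 2 ^ q

lemma herm_add_left (q : ℕ) (u v w : Fin 3 → F) :
    herm q (u + v) w = herm q u w + herm q v w := by
  simp [herm]; ring

lemma herm_smul_left (q : ℕ) (a : F) (u w : Fin 3 → F) :
    herm q (a • u) w = a * herm q u w := by
  simp [herm]; ring

lemma herm_smul_right (q : ℕ) (a : F) (u w : Fin 3 → F) :
    herm q u (a • w) = a ^ q * herm q u w := by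
  simp [herm, mul_pow]; ring

lemma herm_add_right (q : ℕ) (hfrob : ∀ x y : F, (x + y) ^ q = x ^ q + y ^ q)
    (u v w : Fin 3 → F) :
    herm q u (v + w) = herm q u v + herm q u w := by
  simp [herm, hfrob]; ring

lemma herm_conj (q : ℕ) (hfrob : ∀ x y : F, (x + y) ^ q = x ^ q + y ^ q)
    (hq2 : ∀ x : F, (x ^ q) ^ q = x) (v w : Fin 3 → F) :
    (herm q v w) ^ q = herm q w v := by
  simp only [herm, hfrob, mul_pow, hq2]
  ring

lemma pair_indep {V : Type} [AddCommGroup V] [Module F V] {a b : V}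
    (hab : LinearIndependent F ![a, b]) : ∀ s t : F, s • a + t • b = 0 → s = 0 ∧ t = 0 := by
  intro s t hst
  have := Fintype.linearIndependent_iff.1 hab ![s, t] (by
    simpa [Fin.sum_univ_two] using hst)
  exact ⟨this 0, this 1⟩

lemma triple_indep_iff {V : Type} [AddCommGroup V] [Module F V] {a b c : V}
    (h : ∀ s t u : F, s • a + t • b + u • c = 0 → s = 0 ∧ t = 0 ∧ u = 0) :
    LinearIndependent F ![a, b, c] := by
  rw [Fintype.linearIndependent_iff]
  intro g hg
  have := h (g 0) (g 1) (g 2) (by simpa [Fin.sum_univ_three, add_assoc] using hg)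
  intro i
  fin_cases i <;> simp [this.1, this.2.1, this.2.2]

lemma mulVecT (a b : Fin 3 → F) (c : Fin 2 → F) :
    (Matrix.of ![a, b])ᵀ.mulVec c = c 0 • a + c 1 • b := by
  funext i
  simp [Matrix.mulVec, dotProduct, Fin.sum_univ_two, mul_comm]

lemma ker_rank_one (a b : Fin 3 → F) (hab : LinearIndependent F ![a, b]) :
    Module.finrank F (LinearMap.ker (Matrix.mulVecLin (Matrix.of ![a, b]))) = 1 := by
  set M : Matrix (Fin 2) (Fin 3) F := Matrix.of ![a, b] with hM
  have hinj : Function.Injective (Mᵀ.mulVecLin) := by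
    rw [← LinearMap.ker_eq_bot, LinearMap.ker_eq_bot']
    intro c hc
    have hcc : c 0 • a + c 1 • b = 0 := by
      rw [← mulVecT a b c]; exact hc
    obtain ⟨h1, h2⟩ := pair_indep hab _ _ hcc
    funext i; fin_cases i <;> simp [h1, h2]
  have hrt : Mᵀ.rank = 2 := by
    have := LinearMap.finrank_range_add_finrank_ker (Mᵀ.mulVecLin)
    rw [LinearMap.ker_eq_bot.2 hinj] at this
    simp only [finrank_bot, add_zero] at this
    rw [Matrix.rank, this]
    simp
  have hr : M.rank = 2 := by rw [← Matrix.rank_transpose]; exact hrt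
  have := LinearMap.finrank_range_add_finrank_ker (M.mulVecLin)
  rw [show Module.finrank F (LinearMap.range M.mulVecLin) = M.rank from rfl, hr] at this
  simp only [Module.finrank_pi, Fintype.card_fin] at this
  omega

lemma mem_ker_iff (a b x : Fin 3 → F) :
    x ∈ LinearMap.ker (Matrix.mulVecLin (Matrix.of ![a, b])) ↔ a ⬝ᵥ x = 0 ∧ b ⬝ᵥ x = 0 := by
  rw [LinearMap.mem_ker]
  constructor
  · intro h
    exact ⟨congrFun h 0, congrFun h 1⟩
  · intro ⟨h1, h2⟩
    funext i
    fin_cases i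
    · simpa [Matrix.mulVecLin, Matrix.mulVec, dotProduct, Fin.sum_univ_three] using h1
    · simpa [Matrix.mulVecLin, Matrix.mulVec, dotProduct, Fin.sum_univ_three] using h2

lemma perp_dependent (a b x y : Fin 3 → F) (hab : LinearIndependent F ![a, b])
    (hxy : LinearIndependent F ![x, y]) (h1 : a ⬝ᵥ x = 0) (h2 : b ⬝ᵥ x = 0)
    (h3 : a ⬝ᵥ y = 0) (h4 : b ⬝ᵥ y = 0) : False := by
  have hk := ker_rank_one a b hab
  have hle : Submodule.span F (Set.range ![x, y]) ≤
      LinearMap.ker (Matrix.mulVecLin (Matrix.of ![a, b])) := by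
    rw [Submodule.span_le]
    rintro v ⟨i, rfl⟩
    fin_cases i <;> simp [mem_ker_iff, h1, h2, h3, h4]
  have h2' : (2 : ℕ) ≤ 1 := by
    calc (2:ℕ) = Module.finrank F (Submodule.span F (Set.range ![x, y])) := by
          rw [finrank_span_eq_card hxy]; simp
      _ ≤ Module.finrank F (LinearMap.ker (Matrix.mulVecLin (Matrix.of ![a, b]))) :=
          Submodule.finrank_mono hle
      _ = 1 := hk
  omega

lemma exists_perp (a b : Fin 3 → F) (hab : LinearIndependent F ![a, b]) :
    ∃ x : Fin 3 → F, x ≠ 0 ∧ a ⬝ᵥ x = 0 ∧ b ⬝ᵥ x = 0 := by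
  have hk := ker_rank_one a b hab
  have hne : LinearMap.ker (Matrix.mulVecLin (Matrix.of ![a, b])) ≠ ⊥ := by
    intro h
    rw [h, finrank_bot] at hk
    exact one_ne_zero hk.symm
  obtain ⟨x, hx, hx0⟩ := Submodule.exists_mem_ne_zero_of_ne_bot hne
  exact ⟨x, hx0, (mem_ker_iff a b x).1 hx⟩

/-- the coordinatewise Frobenius -/
def vq (q : ℕ) (v : Fin 3 → F) : Fin 3 → F := fun i => v i ^ q

lemma herm_eq_dot (q : ℕ) (v w : Fin 3 → F) : herm q v w = v ⬝ᵥ vq q w := by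
  simp [herm, vq, dotProduct, Fin.sum_univ_three]

lemma herm_eq_dot' (q : ℕ) (v w : Fin 3 → F) : herm q v w = vq q w ⬝ᵥ v := by
  rw [herm_eq_dot, dotProduct_comm]

lemma vq_ne_zero (q : ℕ) (v : Fin 3 → F) (hv : v ≠ 0) : vq q v ≠ 0 := by
  intro h
  apply hv
  funext i
  have := congrFun h i
  simp only [vq, Pi.zero_apply] at this ⊢
  rcases Nat.eq_zero_or_pos q with hq | hq
  · simp [hq] at this
  · exact pow_eq_zero_iff hq.ne' |>.1 this

lemma vq_indep (q : ℕ) (hq2 : ∀ x : F, (x ^ q) ^ q = x) (v w : Fin 3 → F)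
    (h : LinearIndependent F ![v, w]) : LinearIndependent F ![vq q v, vq q w] := by
  have hfi : Function.Injective (fun x : F => x ^ q) := by
    intro x y hxy
    simp only at hxy
    have := congrArg (fun z : F => z ^ q) hxy
    simpa [hq2] using this
  rw [linearIndependent_fin2] at h ⊢
  refine ⟨by simpa using vq_ne_zero q w (by simpa using h.1), ?_⟩
  intro a ha
  simp only [Matrix.cons_val_one, Matrix.head_cons, Matrix.cons_val_zero] at ha
  apply h.2 (a ^ q)
  simp only [Matrix.cons_val_one, Matrix.head_cons, Matrix.cons_val_zero]
  funext i
  apply hfi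
  have := congrFun ha i
  simp only [vq, Pi.smul_apply, smul_eq_mul] at this ⊢
  rw [mul_pow, hq2]
  exact this


lemma indep_of_gram (q : ℕ) (v e₂ x : Fin 3 → F) (hx : x ≠ 0)
    (g1 : herm q v v = 0) (g2 : herm q e₂ v = 1) (g3 : herm q x v = 0)
    (g4 : herm q v e₂ = 1) (g5 : herm q e₂ e₂ = 0) (g6 : herm q x e₂ = 0) :
    LinearIndependent F ![v, e₂, x] := by
  apply triple_indep_iff
  intro s t u hstu
  have hzero : ∀ z : Fin 3 → F, herm q (0 : Fin 3 → F) z = 0 := by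
    intro z; simp [herm]
  have hv0 : herm q (s • v + t • e₂ + u • x) v = 0 := by rw [hstu]; exact hzero v
  have he0 : herm q (s • v + t • e₂ + u • x) e₂ = 0 := by rw [hstu]; exact hzero e₂
  rw [herm_add_left, herm_add_left, herm_smul_left, herm_smul_left, herm_smul_left,
    g1, g2, g3] at hv0
  rw [herm_add_left, herm_add_left, herm_smul_left, herm_smul_left, herm_smul_left,
    g4, g5, g6] at he0
  have ht : t = 0 := by
    have : t = 0 := by linear_combination hv0
    exact this
  have hs : s = 0 := by linear_combination he0
  refine ⟨hs, ht, ?_⟩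
  rw [hs, ht] at hstu
  simp only [zero_smul, zero_add] at hstu
  rcases smul_eq_zero.1 hstu with h | h
  · exact h
  · exact absurd h hx

lemma mulVecT3 (a b c : Fin 3 → F) (y : Fin 3 → F) :
    (Matrix.of ![a, b, c])ᵀ.mulVec y = y 0 • a + y 1 • b + y 2 • c := by
  funext i
  simp [Matrix.mulVec, dotProduct, Fin.sum_univ_three, mul_comm]

lemma herm_comb (q : ℕ) (hfrob : ∀ x y : F, (x + y) ^ q = x ^ q + y ^ q)
    (v e₂ e₃ : Fin 3 → F)
    (g11 : herm q v v = 0) (g22 : herm q e₂ e₂ = 0) (g12 : herm q v e₂ = 1)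
    (g21 : herm q e₂ v = 1) (g13 : herm q v e₃ = 0) (g31 : herm q e₃ v = 0)
    (g23 : herm q e₂ e₃ = 0) (g32 : herm q e₃ e₂ = 0) (g33 : herm q e₃ e₃ = 1)
    (a b c : F) :
    herm q (a • v + b • e₂ + c • e₃) (a • v + b • e₂ + c • e₃) =
      a * b ^ q + b * a ^ q + c * c ^ q := by
  simp only [herm_add_left, herm_add_right q hfrob, herm_smul_left, herm_smul_right,
    g11, g22, g12, g21, g13, g31, g23, g32, g33]
  ring

lemma build_basis (q : ℕ) (hq0 : q ≠ 0)
    (hfrob : ∀ x y : F, (x + y) ^ q = x ^ q + y ^ q)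
    (hq2 : ∀ x : F, (x ^ q) ^ q = x)
    (hnorm : ∀ d : F, d ≠ 0 → d ^ q = d → ∃ l : F, l ≠ 0 ∧ l ^ (q + 1) = d)
    (v w : Fin 3 → F) (hv : herm q v v = 0) (hw : herm q w w = 0)
    (hind : LinearIndependent F ![v, w]) :
    ∃ (e₂ e₃ : Fin 3 → F) (c : F), c ≠ 0 ∧ e₂ = c • w ∧
      LinearIndependent F ![v, e₂, e₃] ∧
      herm q e₂ e₂ = 0 ∧ herm q v e₂ = 1 ∧ herm q e₂ v = 1 ∧
      herm q v e₃ = 0 ∧ herm q e₃ v = 0 ∧ herm q e₂ e₃ = 0 ∧ herm q e₃ e₂ = 0 ∧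
      herm q e₃ e₃ = 1 := by
  -- step 1 : herm q w v ≠ 0
  have hs : herm q w v ≠ 0 := by
    intro hs0
    have hvw : herm q v w = 0 := by
      have := herm_conj q hfrob hq2 v w
      rw [hs0] at this
      exact pow_eq_zero_iff hq0 |>.1 this
    exact perp_dependent v w (vq q v) (vq q w) hind (vq_indep q hq2 v w hind)
      (by rw [← herm_eq_dot]; exact hv) (by rw [← herm_eq_dot]; exact hs0)
      (by rw [← herm_eq_dot]; exact hvw) (by rw [← herm_eq_dot]; exact hw)
  set s := herm q w v with hs_def
  -- step 2 : e₂
  obtain ⟨e₂, he₂_def⟩ : ∃ e : Fin 3 → F, e = s⁻¹ • w := ⟨_, rfl⟩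
  have he₂e₂ : herm q e₂ e₂ = 0 := by
    rw [he₂_def, herm_smul_left, herm_smul_right, hw]; ring
  have he₂v : herm q e₂ v = 1 := by
    rw [he₂_def, herm_smul_left, ← hs_def, inv_mul_cancel₀ hs]
  have hve₂ : herm q v e₂ = 1 := by
    rw [← herm_conj q hfrob hq2 e₂ v, he₂v, one_pow]
  -- step 3 : a vector orthogonal to v and w
  obtain ⟨x, hx0, hxv', hxw'⟩ := exists_perp (vq q v) (vq q w) (vq_indep q hq2 v w hind)
  have hxv : herm q x v = 0 := by rw [herm_eq_dot, dotProduct_comm]; exact hxv'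
  have hxw : herm q x w = 0 := by rw [herm_eq_dot, dotProduct_comm]; exact hxw'
  have hvx : herm q v x = 0 := by
    rw [← herm_conj q hfrob hq2 x v, hxv, zero_pow hq0]
  have hxe₂ : herm q x e₂ = 0 := by
    rw [he₂_def, herm_smul_right, hxw]; ring
  have he₂x : herm q e₂ x = 0 := by
    rw [← herm_conj q hfrob hq2 x e₂, hxe₂, zero_pow hq0]
  -- step 4 : independence of v, e₂, x
  have hindep1 : LinearIndependent F ![v, e₂, x] :=
    indep_of_gram q v e₂ x hx0 hv he₂v hxv hve₂ he₂e₂ hxe₂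
  -- step 5 : herm q x x ≠ 0
  obtain ⟨d, hd_def⟩ : ∃ d : F, d = herm q x x := ⟨_, rfl⟩
  have hd : d ≠ 0 := by
    intro hd0
    have hM : IsUnit (Matrix.of ![v, e₂, x]) := by
      apply Matrix.linearIndependent_rows_iff_isUnit.1
      exact hindep1
    have hMT : IsUnit (Matrix.of ![v, e₂, x])ᵀ := by
      rw [Matrix.isUnit_iff_isUnit_det, Matrix.det_transpose,
        ← Matrix.isUnit_iff_isUnit_det]
      exact hM
    have hsurj := Matrix.mulVec_surjective_iff_isUnit.2 hMT
    have key : ∀ u : Fin 3 → F, herm q u x = 0 := by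
      intro u
      obtain ⟨y, hy⟩ := hsurj u
      rw [mulVecT3] at hy
      rw [← hy, herm_add_left, herm_add_left, herm_smul_left, herm_smul_left,
        herm_smul_left, hvx, he₂x, ← hd_def, hd0]
      ring
    apply hx0
    funext i
    have h0 : x 0 ^ q = 0 := by simpa [herm] using key ![1, 0, 0]
    have h1 : x 1 ^ q = 0 := by simpa [herm] using key ![0, 1, 0]
    have h2 : x 2 ^ q = 0 := by simpa [herm] using key ![0, 0, 1]
    fin_cases i
    · exact pow_eq_zero_iff hq0 |>.1 h0
    · exact pow_eq_zero_iff hq0 |>.1 h1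
    · exact pow_eq_zero_iff hq0 |>.1 h2
  -- step 6 : normalize x
  have hdq : d ^ q = d := by
    rw [hd_def]; exact herm_conj q hfrob hq2 x x
  obtain ⟨l, hl0, hl⟩ := hnorm d⁻¹ (inv_ne_zero hd)
    (by rw [inv_pow, hdq])
  obtain ⟨e₃, he₃_def⟩ : ∃ e : Fin 3 → F, e = l • x := ⟨_, rfl⟩
  have he₃0 : e₃ ≠ 0 := by rw [he₃_def]; exact smul_ne_zero hl0 hx0
  have he₃e₃ : herm q e₃ e₃ = 1 := by
    rw [he₃_def, herm_smul_left, herm_smul_right, ← hd_def]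
    calc l * (l ^ q * d) = l ^ (q + 1) * d := by ring
      _ = 1 := by rw [hl, inv_mul_cancel₀ hd]
  have hve₃ : herm q v e₃ = 0 := by rw [he₃_def, herm_smul_right, hvx]; ring
  have he₃v : herm q e₃ v = 0 := by rw [he₃_def, herm_smul_left, hxv]; ring
  have he₂e₃ : herm q e₂ e₃ = 0 := by rw [he₃_def, herm_smul_right, he₂x]; ring
  have he₃e₂ : herm q e₃ e₂ = 0 := by rw [he₃_def, herm_smul_left, hxe₂]; ring
  have hindep : LinearIndependent F ![v, e₂, e₃] :=
    indep_of_gram q v e₂ e₃ he₃0 hv he₂v he₃v hve₂ he₂e₂ he₃e₂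
  exact ⟨e₂, e₃, s⁻¹, inv_ne_zero hs, he₂_def, hindep, he₂e₂, hve₂, he₂v,
    hve₃, he₃v, he₂e₃, he₃e₂, he₃e₃⟩

lemma build_matrix (q : ℕ) (hq0 : q ≠ 0)
    (hfrob : ∀ x y : F, (x + y) ^ q = x ^ q + y ^ q)
    (hq2 : ∀ x : F, (x ^ q) ^ q = x)
    (hnorm : ∀ d : F, d ≠ 0 → d ^ q = d → ∃ l : F, l ≠ 0 ∧ l ^ (q + 1) = d)
    (v w v' w' : Fin 3 → F) (hv : herm q v v = 0) (hw : herm q w w = 0)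
    (hv' : herm q v' v' = 0) (hw' : herm q w' w' = 0)
    (hind : LinearIndependent F ![v, w]) (hind' : LinearIndependent F ![v', w']) :
    ∃ A : Matrix (Fin 3) (Fin 3) F, IsUnit A ∧
      (∀ u : Fin 3 → F, herm q (A.mulVec u) (A.mulVec u) = herm q u u) ∧
      A.mulVec v = v' ∧ ∃ l : F, l ≠ 0 ∧ A.mulVec w = l • w' := by
  obtain ⟨e₂, e₃, c, hc, he₂, hindep, g22, g12, g21, g13, g31, g23, g32, g33⟩ :=
    build_basis q hq0 hfrob hq2 hnorm v w hv hw hind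
  obtain ⟨f₂, f₃, c', hc', hf₂, hindep', g22', g12', g21', g13', g31', g23', g32', g33'⟩ :=
    build_basis q hq0 hfrob hq2 hnorm v' w' hv' hw' hind'
  set C : Matrix (Fin 3) (Fin 3) F := (Matrix.of ![v, e₂, e₃])ᵀ with hC_def
  set C' : Matrix (Fin 3) (Fin 3) F := (Matrix.of ![v', f₂, f₃])ᵀ with hC'_def
  have hCu : IsUnit C := by
    rw [hC_def, Matrix.isUnit_iff_isUnit_det, Matrix.det_transpose,
      ← Matrix.isUnit_iff_isUnit_det]
    exact Matrix.linearIndependent_rows_iff_isUnit.1 hindep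
  have hC'u : IsUnit C' := by
    rw [hC'_def, Matrix.isUnit_iff_isUnit_det, Matrix.det_transpose,
      ← Matrix.isUnit_iff_isUnit_det]
    exact Matrix.linearIndependent_rows_iff_isUnit.1 hindep'
  have hCdet : IsUnit C.det := (Matrix.isUnit_iff_isUnit_det C).1 hCu
  refine ⟨C' * C⁻¹, ?_, ?_, ?_, ?_⟩
  · apply (Matrix.isUnit_iff_isUnit_det _).2
    rw [Matrix.det_mul]
    exact ((Matrix.isUnit_iff_isUnit_det C').1 hC'u).mul (Matrix.isUnit_nonsing_inv_det C hCdet)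
  · intro u
    obtain ⟨y, hy⟩ := Matrix.mulVec_surjective_iff_isUnit.2 hCu u
    have hkey : (C' * C⁻¹).mulVec u = C'.mulVec y := by
      rw [← hy, Matrix.mulVec_mulVec, Matrix.mul_assoc, Matrix.nonsing_inv_mul C hCdet,
        Matrix.mul_one]
    rw [hkey, ← hy, hC_def, hC'_def, mulVecT3, mulVecT3,
      herm_comb q hfrob v' f₂ f₃ hv' g22' g12' g21' g13' g31' g23' g32' g33',
      herm_comb q hfrob v e₂ e₃ hv g22 g12 g21 g13 g31 g23 g32 g33]
  · have h1 : C.mulVec ![1, 0, 0] = v := by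
      rw [hC_def, mulVecT3]; simp
    have h2 : (C' * C⁻¹).mulVec (C.mulVec ![1, 0, 0]) = C'.mulVec ![1, 0, 0] := by
      rw [Matrix.mulVec_mulVec, Matrix.mul_assoc, Matrix.nonsing_inv_mul C hCdet,
        Matrix.mul_one]
    rw [h1] at h2
    rw [h2, hC'_def, mulVecT3]; simp
  · refine ⟨c⁻¹ * c', mul_ne_zero (inv_ne_zero hc) hc', ?_⟩
    have hw_eq : w = c⁻¹ • e₂ := by
      rw [he₂, smul_smul, inv_mul_cancel₀ hc, one_smul]
    have h1 : C.mulVec ![0, c⁻¹, 0] = w := by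
      rw [hC_def, mulVecT3, hw_eq]; simp
    have h2 : (C' * C⁻¹).mulVec (C.mulVec ![0, c⁻¹, 0]) = C'.mulVec ![0, c⁻¹, 0] := by
      rw [Matrix.mulVec_mulVec, Matrix.mul_assoc, Matrix.nonsing_inv_mul C hCdet,
        Matrix.mul_one]
    rw [h1] at h2
    rw [h2, hC'_def, mulVecT3, hf₂]
    simp [smul_smul]


lemma norm_surj {F : Type} [Field F] [Fintype F] (q : ℕ) (hq1 : 2 ≤ q)
    (hF : Fintype.card F = q ^ 2) (d : F) (hd : d ≠ 0) (hdq : d ^ q = d) :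
    ∃ l : F, l ≠ 0 ∧ l ^ (q + 1) = d := by
  set m := q - 1 with hm
  have hm1 : 1 ≤ m := by omega
  have hdm : d ^ m = 1 := by
    have h1 : d ^ m * d = 1 * d := by
      rw [one_mul, ← pow_succ, show m + 1 = q by omega, hdq]
    exact mul_right_cancel₀ hd h1
  set du : Fˣ := Units.mk0 d hd with hdu
  have hdum : du ^ m = 1 := by
    ext
    push_cast
    exact hdm
  classical
  haveI : Fintype Fˣ := Fintype.ofFinite Fˣ
  obtain ⟨g, hg⟩ := IsCyclic.exists_generator (α := Fˣ)
  have horder : orderOf g = (q + 1) * m := by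
    have e : (q + 1) * m + 1 = q ^ 2 := by
      obtain ⟨t, rfl⟩ : ∃ t, q = t + 2 := ⟨q - 2, by omega⟩
      have hmt : m = t + 1 := by omega
      rw [hmt]; ring
    rw [orderOf_eq_card_of_forall_mem_zpowers hg, Nat.card_units, Nat.card_eq_fintype_card, hF]
    rw [Nat.sub_eq_iff_eq_add (by nlinarith : (1:ℕ) ≤ q ^ 2)]
    exact e.symm
  obtain ⟨k, hk⟩ := Subgroup.mem_zpowers_iff.1 (hg du)
  have hdvd : ((q + 1 : ℕ) : ℤ) * (m : ℤ) ∣ k * (m : ℤ) := by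
    have h1 : g ^ (k * (m : ℤ)) = 1 := by
      rw [_root_.zpow_mul, hk, zpow_natCast, hdum]
    have := orderOf_dvd_iff_zpow_eq_one.2 h1
    rwa [horder, Nat.cast_mul] at this
  have hdvd2 : ((q + 1 : ℕ) : ℤ) ∣ k :=
    (mul_dvd_mul_iff_right (by exact_mod_cast (by omega : (m:ℤ) ≠ 0))).1 hdvd
  obtain ⟨j, hj⟩ := hdvd2
  refine ⟨((g ^ j : Fˣ) : F), Units.ne_zero _, ?_⟩
  have : (g ^ j) ^ (q + 1 : ℕ) = du := by
    rw [← zpow_natCast (g ^ j), ← _root_.zpow_mul, mul_comm, ← hj, hk]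
  calc ((g ^ j : Fˣ) : F) ^ (q + 1) = (((g ^ j) ^ (q + 1 : ℕ) : Fˣ) : F) := by push_cast; ring
    _ = d := by rw [this]; rfl

lemma frob_facts {F : Type} [Field F] [Fintype F] (p n q : ℕ) (hp : p.Prime) (hn : 1 ≤ n)
    (hq : q = p ^ n) (hF : Fintype.card F = q ^ 2) :
    (∀ x y : F, (x + y) ^ q = x ^ q + y ^ q) ∧ (∀ x : F, (x ^ q) ^ q = x) := by
  have hq2 : ∀ x : F, (x ^ q) ^ q = x := by
    intro x
    rw [← pow_mul, ← pow_two, ← hF, FiniteField.pow_card]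
  refine ⟨?_, hq2⟩
  haveI : CharP F (ringChar F) := ringChar.charP F
  obtain ⟨m, hrp, hcard⟩ := FiniteField.card F (ringChar F)
  have hpr : p = ringChar F := by
    have hdvd : p ∣ ringChar F ^ (m : ℕ) := by
      rw [← hcard, hF, hq]
      exact dvd_pow (dvd_pow_self p (by omega)) (by norm_num)
    have := hp.dvd_of_dvd_pow hdvd
    exact ((Nat.prime_dvd_prime_iff_eq hp hrp).1 this)
  haveI : Fact p.Prime := ⟨hp⟩
  haveI : CharP F p := by rwa [hpr]
  intro x y
  rw [hq]
  exact add_pow_char_pow x y p n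

end HermAux


/-- Let `q = p ^ n` and `F` be a finite field with `q²` elements. The group
of projectivities preserving the Hermitian curve `H_q(F) : x^(q+1) + y^(q+1) + t^(q+1) = 0`
acts 2-transitively on `H_q(F)`: given points `P₁ ≠ P₂` and `Q₁ ≠ Q₂` of `PG(2, F)` lying on
the curve, some invertible matrix `A` maps the set of nonzero solutions of the equation onto
itself and its induced projectivity sends `P₁` to `Q₁` and `P₂` to `Q₂`. -/
theorem hermitian_curve_two_transitive
    (p n q : ℕ) (hp : p.Prime) (hn : 1 ≤ n) (hq : q = p ^ n)
    (F : Type) [Field F] [Fintype F] (hF : Fintype.card F = q ^ 2)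
    (P₁ P₂ Q₁ Q₂ : Projectivization F (Fin 3 → F)) (hP : P₁ ≠ P₂) (hQ : Q₁ ≠ Q₂)
    (honc : ∀ P ∈ ({P₁, P₂, Q₁, Q₂} : Set (Projectivization F (Fin 3 → F))),
      P.rep 0 ^ (q + 1) + P.rep 1 ^ (q + 1) + P.rep 2 ^ (q + 1) = 0) :
    ∃ A : Matrix (Fin 3) (Fin 3) F, IsUnit A ∧
      Set.BijOn A.mulVec
        {v : Fin 3 → F | v ≠ 0 ∧ v 0 ^ (q + 1) + v 1 ^ (q + 1) + v 2 ^ (q + 1) = 0}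
        {v : Fin 3 → F | v ≠ 0 ∧ v 0 ^ (q + 1) + v 1 ^ (q + 1) + v 2 ^ (q + 1) = 0} ∧
      (∃ l : F, l ≠ 0 ∧ A.mulVec P₁.rep = l • Q₁.rep) ∧
      (∃ l : F, l ≠ 0 ∧ A.mulVec P₂.rep = l • Q₂.rep) := by
  classical
  have hq1 : 2 ≤ q := by
    rw [hq]
    calc 2 ≤ p := hp.two_le
      _ ≤ p ^ n := Nat.le_self_pow (by omega) p
  have hq0 : q ≠ 0 := by omega
  obtain ⟨hfrob, hq2⟩ := HermAux.frob_facts p n q hp hn hq hF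
  have hnorm : ∀ d : F, d ≠ 0 → d ^ q = d → ∃ l : F, l ≠ 0 ∧ l ^ (q + 1) = d :=
    fun d hd hdq => HermAux.norm_surj q hq1 hF d hd hdq
  have hcurve : ∀ v : Fin 3 → F,
      v 0 ^ (q + 1) + v 1 ^ (q + 1) + v 2 ^ (q + 1) = HermAux.herm q v v := by
    intro v
    simp only [HermAux.herm, pow_succ]
    ring
  have hiso : ∀ P ∈ ({P₁, P₂, Q₁, Q₂} : Set (Projectivization F (Fin 3 → F))),
      HermAux.herm q P.rep P.rep = 0 := by
    intro P hPm
    rw [← hcurve]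
    exact honc P hPm
  have hindP : LinearIndependent F ![P₁.rep, P₂.rep] := by
    rw [linearIndependent_fin2]
    refine ⟨by simpa using P₂.rep_nonzero, ?_⟩
    intro a ha
    simp only [Matrix.cons_val_one, Matrix.head_cons, Matrix.cons_val_zero] at ha
    apply hP
    have := (Projectivization.mk_eq_mk_iff' F P₁.rep P₂.rep P₁.rep_nonzero
      P₂.rep_nonzero).2 ⟨a, ha⟩
    rwa [Projectivization.mk_rep, Projectivization.mk_rep] at this
  have hindQ : LinearIndependent F ![Q₁.rep, Q₂.rep] := by
    rw [linearIndependent_fin2]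
    refine ⟨by simpa using Q₂.rep_nonzero, ?_⟩
    intro a ha
    simp only [Matrix.cons_val_one, Matrix.head_cons, Matrix.cons_val_zero] at ha
    apply hQ
    have := (Projectivization.mk_eq_mk_iff' F Q₁.rep Q₂.rep Q₁.rep_nonzero
      Q₂.rep_nonzero).2 ⟨a, ha⟩
    rwa [Projectivization.mk_rep, Projectivization.mk_rep] at this
  obtain ⟨A, hA, hpres, hA1, l₂, hl₂, hA2⟩ :=
    HermAux.build_matrix q hq0 hfrob hq2 hnorm P₁.rep P₂.rep Q₁.rep Q₂.rep
      (hiso P₁ (by simp)) (hiso P₂ (by simp)) (hiso Q₁ (by simp)) (hiso Q₂ (by simp))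
      hindP hindQ
  have hinj : Function.Injective A.mulVec := Matrix.mulVec_injective_iff_isUnit.2 hA
  have hsurj : Function.Surjective A.mulVec := Matrix.mulVec_surjective_iff_isUnit.2 hA
  refine ⟨A, hA, ⟨?_, hinj.injOn, ?_⟩, ⟨1, one_ne_zero, by rw [hA1, one_smul]⟩,
    ⟨l₂, hl₂, hA2⟩⟩
  · rintro v ⟨hv0, hv⟩
    refine ⟨?_, ?_⟩
    · intro h0
      apply hv0
      apply hinj
      rw [h0, Matrix.mulVec_zero]
    · rw [hcurve (A.mulVec v), hpres v, ← hcurve v]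
      exact hv
  · rintro v ⟨hv0, hv⟩
    obtain ⟨u, hu⟩ := hsurj v
    refine ⟨u, ⟨?_, ?_⟩, hu⟩
    · intro h0
      apply hv0
      rw [← hu, h0, Matrix.mulVec_zero]
    · rw [hcurve u, ← hpres u, hu, ← hcurve v]
      exact hv
end
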